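/- arXiv:2007.02868 — 4 statements merged into one kernel-verified Lean document; each statement's English description precedes it below -/
import Mathlib

section
/- Let A be a graphop on L^∞(Ω,m) with ‖A‖_{p→q} < ∞ for some p,q ∈ [1,∞], and let μ̄, κ̄ be families of finite measures on 𝕋 with mass ≤ b. Then for all t ∈ [0,T], u ∈ 𝕋: ∫_Ω |V[𝒜,μ,x](t,u) − V[𝒜,κ,x](t,u)| dm(x) ≤ 2C·‖A‖_{p→q}·( ∫_Ω d_BL(μ_t^y, κ_t^y)^p dm(y) )^{1/p}. In particular, if ‖A‖_{1→q} < ∞ then the left side is at most 2C·‖A‖_{1→q}·∫_Ω d_BL(μ_t^y, κ_t^y) dm(y). -/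
open MeasureTheory
open scoped ENNReal NNReal

instance : Fact (0 < 2 * Real.pi) := ⟨by positivity⟩

noncomputable abbrev Circle2pi := AddCircle (2 * Real.pi)

/-- The bounded-Lipschitz distance on finite measures on the circle. -/
noncomputable def dBL (μ κ : Measure Circle2pi) : ℝ :=
  ⨆ f : {f : Circle2pi → ℝ // LipschitzWith 1 f ∧ ∀ v, f v ∈ Set.Icc (0:ℝ) 1},
    |(∫ v, f.1 v ∂μ) - ∫ v, f.1 v ∂κ|

namespace DBLAux

abbrev Idx := {f : Circle2pi → ℝ // LipschitzWith 1 f ∧ ∀ v, f v ∈ Set.Icc (0:ℝ) 1}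

instance : Nonempty Idx :=
  ⟨⟨fun _ => 0, (LipschitzWith.const 0).weaken zero_le_one,
    fun _ => ⟨le_refl 0, zero_le_one⟩⟩⟩

lemma integrable_of_abs_le {α : Type*} [MeasurableSpace α] {μ : Measure α} [IsFiniteMeasure μ]
    {f : α → ℝ} (hf : AEStronglyMeasurable f μ) {M : ℝ} (h : ∀ x, |f x| ≤ M) :
    Integrable f μ :=
  Integrable.mono' (integrable_const M) hf
    (Filter.Eventually.of_forall fun x => by simpa [Real.norm_eq_abs] using h x)

lemma idx_abs_le (f : Idx) (v : Circle2pi) : |f.1 v| ≤ 1 := by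
  have := f.2.2 v
  rw [abs_le]; constructor <;> [linarith [this.1]; exact this.2]

lemma idx_integrable (f : Idx) (μ : Measure Circle2pi) [IsFiniteMeasure μ] :
    Integrable f.1 μ :=
  integrable_of_abs_le (f.2.1.continuous.aestronglyMeasurable) (idx_abs_le f)

lemma idx_term_le (μ κ : Measure Circle2pi) [IsFiniteMeasure μ] [IsFiniteMeasure κ] (f : Idx) :
    |(∫ v, f.1 v ∂μ) - ∫ v, f.1 v ∂κ|
      ≤ (μ Set.univ).toReal + (κ Set.univ).toReal := by
  have h1 : ‖∫ v, f.1 v ∂μ‖ ≤ 1 * (μ Set.univ).toReal :=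
    norm_integral_le_of_norm_le_const
      (Filter.Eventually.of_forall fun v => by simpa [Real.norm_eq_abs] using idx_abs_le f v)
  have h2 : ‖∫ v, f.1 v ∂κ‖ ≤ 1 * (κ Set.univ).toReal :=
    norm_integral_le_of_norm_le_const
      (Filter.Eventually.of_forall fun v => by simpa [Real.norm_eq_abs] using idx_abs_le f v)
  calc |(∫ v, f.1 v ∂μ) - ∫ v, f.1 v ∂κ| ≤ ‖∫ v, f.1 v ∂μ‖ + ‖∫ v, f.1 v ∂κ‖ := abs_sub _ _
  _ ≤ _ := by rw [one_mul] at h1 h2; exact add_le_add h1 h2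

lemma bddAbove_idx (μ κ : Measure Circle2pi) [IsFiniteMeasure μ] [IsFiniteMeasure κ] :
    BddAbove (Set.range fun f : Idx => |(∫ v, f.1 v ∂μ) - ∫ v, f.1 v ∂κ|) := by
  refine ⟨(μ Set.univ).toReal + (κ Set.univ).toReal, ?_⟩
  rintro _ ⟨f, rfl⟩
  exact idx_term_le μ κ f

lemma abs_integral_sub_le_dBL (μ κ : Measure Circle2pi) [IsFiniteMeasure μ] [IsFiniteMeasure κ]
    (f : Idx) : |(∫ v, f.1 v ∂μ) - ∫ v, f.1 v ∂κ| ≤ dBL μ κ :=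
  le_ciSup (bddAbove_idx μ κ) f

lemma dBL_nonneg (μ κ : Measure Circle2pi) : 0 ≤ dBL μ κ :=
  Real.iSup_nonneg fun _ => abs_nonneg _

lemma dBL_le (μ κ : Measure Circle2pi) [IsFiniteMeasure μ] [IsFiniteMeasure κ] :
    dBL μ κ ≤ (μ Set.univ).toReal + (κ Set.univ).toReal :=
  ciSup_le fun f => idx_term_le μ κ f


lemma abs_integral_D_sub_le (μ κ : Measure Circle2pi) [IsFiniteMeasure μ] [IsFiniteMeasure κ]
    (D : Circle2pi → ℝ) (hD : LipschitzWith 1 D) (hDbd : ∀ v, |D v| ≤ 1) (u : Circle2pi) :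
    |(∫ w, D (w - u) ∂μ) - ∫ w, D (w - u) ∂κ| ≤ 2 * dBL μ κ := by
  set E : Circle2pi → ℝ := fun w => D (w - u) with hEdef
  have hsub : LipschitzWith 1 (fun w : Circle2pi => w - u) :=
    LipschitzWith.of_dist_le_mul fun a b => by rw [NNReal.coe_one, one_mul, dist_sub_right]
  have hE : LipschitzWith 1 E := by have h := hD.comp hsub; rw [mul_one] at h; exact h
  have hEbd : ∀ v, |E v| ≤ 1 := fun v => hDbd _
  have hpos : LipschitzWith 1 (fun w => max (E w) 0) := hE.max_const 0
  have hneg : LipschitzWith 1 (fun w => max (-E w) 0) := hE.neg.max_const 0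
  set fp : Idx := ⟨fun w => max (E w) 0, hpos,
    fun v => ⟨le_max_right _ _, max_le (abs_le.1 (hEbd v)).2 zero_le_one⟩⟩
  set fm : Idx := ⟨fun w => max (-E w) 0, hneg,
    fun v => ⟨le_max_right _ _, max_le (by linarith [(abs_le.1 (hEbd v)).1]) zero_le_one⟩⟩
  have hsplit : ∀ (ρ : Measure Circle2pi) [IsFiniteMeasure ρ],
      ∫ w, E w ∂ρ = (∫ w, fp.1 w ∂ρ) - ∫ w, fm.1 w ∂ρ := by
    intro ρ hρ
    rw [← integral_sub]
    · congr 1 with w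
      exact (max_zero_sub_max_neg_zero_eq_self (E w)).symm
    · exact integrable_of_abs_le hpos.continuous.aestronglyMeasurable (M := 1)
        (fun v => by
          rw [abs_of_nonneg (le_max_right _ _)]
          exact max_le (abs_le.1 (hEbd v)).2 zero_le_one)
    · exact integrable_of_abs_le hneg.continuous.aestronglyMeasurable (M := 1)
        (fun v => by
          rw [abs_of_nonneg (le_max_right _ _)]
          exact max_le (by linarith [(abs_le.1 (hEbd v)).1]) zero_le_one)
  rw [hsplit μ, hsplit κ]
  have h1 := abs_integral_sub_le_dBL μ κ fp
  have h2 := abs_integral_sub_le_dBL μ κ fm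
  calc |((∫ w, fp.1 w ∂μ) - ∫ w, fm.1 w ∂μ) - ((∫ w, fp.1 w ∂κ) - ∫ w, fm.1 w ∂κ)|
      = |((∫ w, fp.1 w ∂μ) - ∫ w, fp.1 w ∂κ) - ((∫ w, fm.1 w ∂μ) - ∫ w, fm.1 w ∂κ)| := by ring_nf
    _ ≤ |(∫ w, fp.1 w ∂μ) - ∫ w, fp.1 w ∂κ| + |(∫ w, fm.1 w ∂μ) - ∫ w, fm.1 w ∂κ| := abs_sub _ _
    _ ≤ 2 * dBL μ κ := by linarith

lemma measurable_integral_kernel {Ω : Type*} [MeasurableSpace Ω] (μ : Ω → Measure Circle2pi)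
    [∀ y, IsFiniteMeasure (μ y)] (b : ℝ)
    (hμb : ∀ y, μ y Set.univ ≤ ENNReal.ofReal b)
    (hmeas : ∀ S : Set Circle2pi, MeasurableSet S → Measurable fun y => μ y S)
    (f : Circle2pi → ℝ) (hf : Continuous f) :
    Measurable fun y => ∫ w, f w ∂(μ y) := by
  have hμmeas : Measurable μ := Measure.measurable_of_measurable_coe _ hmeas
  let k : ProbabilityTheory.Kernel Ω Circle2pi := ⟨μ, hμmeas⟩
  haveI : ProbabilityTheory.IsFiniteKernel k :=
    ⟨⟨ENNReal.ofReal b, ENNReal.ofReal_lt_top, fun a => hμb a⟩⟩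
  have h := MeasureTheory.StronglyMeasurable.integral_kernel_prod_right
    (κ := k) (f := fun (_ : Ω) (w : Circle2pi) => f w)
    (hf.stronglyMeasurable.comp_measurable measurable_snd)
  exact h.measurable


noncomputable def SLip : Set C(Circle2pi, ℝ) :=
  {g | LipschitzWith 1 ⇑g ∧ ∀ v, g v ∈ Set.Icc (0:ℝ) 1}

instance : Nonempty SLip :=
  ⟨⟨⟨fun _ => 0, continuous_const⟩,
    (LipschitzWith.const 0).weaken zero_le_one, fun _ => ⟨le_refl 0, zero_le_one⟩⟩⟩

lemma exists_seq_dBL :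
    ∃ f : ℕ → Idx, ∀ (μ κ : Measure Circle2pi), IsFiniteMeasure μ → IsFiniteMeasure κ →
      dBL μ κ = ⨆ n, |(∫ v, (f n).1 v ∂μ) - ∫ v, (f n).1 v ∂κ| := by
  obtain ⟨T, hTc, hTd⟩ := TopologicalSpace.exists_countable_dense (↥SLip)
  have hTne : T.Nonempty := hTd.nonempty
  obtain ⟨e, he⟩ := Set.Countable.exists_eq_range hTc hTne
  set F : ℕ → Idx := fun m => ⟨(e m).1, (e m).2.1, (e m).2.2⟩ with hF
  refine ⟨F, ?_⟩
  intro μ κ hμ hκ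
  have hbddN : BddAbove (Set.range fun n : ℕ =>
      |(∫ v, (F n).1 v ∂μ) - ∫ v, (F n).1 v ∂κ|) := by
    refine ⟨(μ Set.univ).toReal + (κ Set.univ).toReal, ?_⟩
    rintro _ ⟨n, rfl⟩
    exact idx_term_le μ κ (F n)
  apply le_antisymm
  · apply ciSup_le
    intro f
    apply le_of_forall_pos_le_add
    intro ε hε
    set M : ℝ := (μ Set.univ).toReal + (κ Set.univ).toReal with hM
    have hM0 : 0 ≤ M := by positivity
    set δ : ℝ := ε / (M + 1) with hδ
    have hδ0 : 0 < δ := by positivity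
    set g₀ : C(Circle2pi, ℝ) := ⟨f.1, f.2.1.continuous⟩ with hg₀
    have hg₀S : g₀ ∈ SLip := ⟨f.2.1, f.2.2⟩
    obtain ⟨t, htT, htd⟩ := hTd.exists_dist_lt (⟨g₀, hg₀S⟩ : ↥SLip) hδ0
    rw [he] at htT
    obtain ⟨n, rfl⟩ := htT
    have hdist : ∀ v, |f.1 v - (F n).1 v| ≤ δ := by
      intro v
      have h1 : dist (g₀ v) ((e n).1 v) ≤ dist g₀ (e n).1 := ContinuousMap.dist_apply_le_dist v
      have h2 : dist (⟨g₀, hg₀S⟩ : ↥SLip) (e n) = dist g₀ (e n).1 := rfl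
      rw [h2] at htd
      calc |f.1 v - (F n).1 v| = dist (g₀ v) ((e n).1 v) := by rw [Real.dist_eq]; rfl
        _ ≤ _ := h1.trans htd.le
    have key : ∀ (ρ : Measure Circle2pi), IsFiniteMeasure ρ →
        |(∫ v, f.1 v ∂ρ) - ∫ v, (F n).1 v ∂ρ| ≤ δ * (ρ Set.univ).toReal := by
      intro ρ hρ
      rw [← integral_sub (idx_integrable f ρ) (idx_integrable (F n) ρ)]
      have := norm_integral_le_of_norm_le_const (μ := ρ)
        (f := fun v => f.1 v - (F n).1 v) (C := δ)
        (Filter.Eventually.of_forall fun v => by simpa [Real.norm_eq_abs] using hdist v)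
      simpa [Real.norm_eq_abs, measureReal_def] using this
    have hμkey := key μ hμ
    have hκkey := key κ hκ
    have hterm : |(∫ v, (F n).1 v ∂μ) - ∫ v, (F n).1 v ∂κ|
        ≤ ⨆ m, |(∫ v, (F m).1 v ∂μ) - ∫ v, (F m).1 v ∂κ| := le_ciSup hbddN n
    have hδM : δ * (μ Set.univ).toReal + δ * (κ Set.univ).toReal ≤ ε := by
      have h1 : δ * (M + 1) = ε := by rw [hδ, div_mul_cancel₀ _ (by linarith : M + 1 ≠ 0)]
      nlinarith [hδ0.le]
    have hsplit : (∫ v, f.1 v ∂μ) - ∫ v, f.1 v ∂κ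
        = ((∫ v, (F n).1 v ∂μ) - ∫ v, (F n).1 v ∂κ)
          + (((∫ v, f.1 v ∂μ) - ∫ v, (F n).1 v ∂μ)
            - ((∫ v, f.1 v ∂κ) - ∫ v, (F n).1 v ∂κ)) := by ring
    calc |(∫ v, f.1 v ∂μ) - ∫ v, f.1 v ∂κ|
        ≤ |(∫ v, (F n).1 v ∂μ) - ∫ v, (F n).1 v ∂κ|
          + (|(∫ v, f.1 v ∂μ) - ∫ v, (F n).1 v ∂μ| + |(∫ v, f.1 v ∂κ) - ∫ v, (F n).1 v ∂κ|) := by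
          rw [hsplit]
          exact (abs_add_le _ _).trans (by gcongr; exact abs_sub _ _)
      _ ≤ (⨆ m, |(∫ v, (F m).1 v ∂μ) - ∫ v, (F m).1 v ∂κ|) + ε := by
          refine add_le_add hterm ?_
          calc _ ≤ δ * (μ Set.univ).toReal + δ * (κ Set.univ).toReal := add_le_add hμkey hκkey
            _ ≤ ε := hδM
  · exact ciSup_le fun n => abs_integral_sub_le_dBL μ κ (F n)


lemma measurable_dBL {Ω : Type*} [MeasurableSpace Ω] (b : ℝ)
    (μ κ : Ω → Measure Circle2pi)
    [∀ y, IsFiniteMeasure (μ y)] [∀ y, IsFiniteMeasure (κ y)]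
    (hμb : ∀ y, μ y Set.univ ≤ ENNReal.ofReal b)
    (hκb : ∀ y, κ y Set.univ ≤ ENNReal.ofReal b)
    (hmeasμ : ∀ S : Set Circle2pi, MeasurableSet S → Measurable fun y => μ y S)
    (hmeasκ : ∀ S : Set Circle2pi, MeasurableSet S → Measurable fun y => κ y S) :
    Measurable fun y => dBL (μ y) (κ y) := by
  obtain ⟨f, hf⟩ := exists_seq_dBL
  have heq : (fun y => dBL (μ y) (κ y))
      = fun y => ⨆ n, |(∫ v, (f n).1 v ∂(μ y)) - ∫ v, (f n).1 v ∂(κ y)| :=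
    funext fun y => hf (μ y) (κ y) inferInstance inferInstance
  rw [heq]
  refine Measurable.iSup fun n => ?_
  have h1 := measurable_integral_kernel μ b hμb hmeasμ (f n).1 (f n).2.1.continuous
  have h2 := measurable_integral_kernel κ b hκb hmeasκ (f n).1 (f n).2.1.continuous
  exact (h1.sub h2).abs

end DBLAux

/-- (Estimation for varying measure.) If the graphop `A` has finite
`(p→q)` operator norm `‖A‖_{p→q} ≤ Anorm`, then
`∫_Ω |V[𝒜,μ,x](u) − V[𝒜,κ,x](u)| dm(x) ≤ 2C·Anorm·(∫_Ω d_BL(μ^y,κ^y)^p dm(y))^{1/p}`;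
in particular for `p = 1` the right-hand side is `2C·Anorm·∫_Ω d_BL(μ^y,κ^y) dm(y)`. -/
theorem estimation_varying_measure
    {Ω : Type*} [MeasurableSpace Ω] (m : Measure Ω) [IsProbabilityMeasure m]
    (C b Anorm : ℝ) (hC : 0 < C) (hb : 0 < b) (hAnorm : 0 ≤ Anorm)
    (p q : ℝ≥0∞) (hp : 1 ≤ p) (hq : 1 ≤ q)
    (D : Circle2pi → ℝ) (hD : LipschitzWith 1 D) (hDbd : ∀ v, |D v| ≤ 1)
    (ν : Ω → Measure Ω) [∀ x, IsFiniteMeasure (ν x)]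
    (A : (Ω → ℝ) → (Ω → ℝ))
    (hAfib : ∀ g : Ω → ℝ, Measurable g → (∃ M, ∀ y, |g y| ≤ M) →
      ∀ x, A g x = ∫ y, g y ∂(ν x))
    (hAmeas : ∀ g : Ω → ℝ, Measurable g → Measurable (A g))
    -- finiteness of the (p→q) operator norm: `‖Ag‖_q ≤ Anorm ‖g‖_p`
    (hApq : ∀ g : Ω → ℝ, Measurable g → (∃ M, ∀ y, |g y| ≤ M) →
      eLpNorm (A g) q m ≤ ENNReal.ofReal Anorm * eLpNorm g p m)
    (μ κ : Ω → Measure Circle2pi)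
    [∀ y, IsFiniteMeasure (μ y)] [∀ y, IsFiniteMeasure (κ y)]
    (hμb : ∀ y, μ y Set.univ ≤ ENNReal.ofReal b)
    (hκb : ∀ y, κ y Set.univ ≤ ENNReal.ofReal b)
    (hmeasμ : ∀ S : Set Circle2pi, MeasurableSet S → Measurable fun y => μ y S)
    (hmeasκ : ∀ S : Set Circle2pi, MeasurableSet S → Measurable fun y => κ y S)
    (V : (Ω → Measure Circle2pi) → Ω → Circle2pi → ℝ)
    (hV : ∀ (ρ : Ω → Measure Circle2pi) (x : Ω) (u : Circle2pi),
      V ρ x u = C * A (fun y => ∫ w, D (w - u) ∂(ρ y)) x) :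
    ∀ u : Circle2pi,
      (ENNReal.ofReal (∫ x, |V μ x u - V κ x u| ∂m)
          ≤ ENNReal.ofReal (2 * C * Anorm) * eLpNorm (fun y => dBL (μ y) (κ y)) p m) ∧
      (p = 1 →
        ∫ x, |V μ x u - V κ x u| ∂m
          ≤ 2 * C * Anorm * ∫ y, dBL (μ y) (κ y) ∂m) := by
  intro u
  have hbR : 0 ≤ b := hb.le
  have hDEcont : Continuous (fun w : Circle2pi => D (w - u)) :=
    hD.continuous.comp (continuous_id.sub continuous_const)
  set gμ : Ω → ℝ := fun y => ∫ w, D (w - u) ∂(μ y) with hgμ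
  set gκ : Ω → ℝ := fun y => ∫ w, D (w - u) ∂(κ y) with hgκ
  set g : Ω → ℝ := fun y => gμ y - gκ y with hg
  have hgμmeas : Measurable gμ := DBLAux.measurable_integral_kernel μ b hμb hmeasμ _ hDEcont
  have hgκmeas : Measurable gκ := DBLAux.measurable_integral_kernel κ b hκb hmeasκ _ hDEcont
  have hgmeas : Measurable g := hgμmeas.sub hgκmeas
  have habs : ∀ (ρ : Measure Circle2pi), IsFiniteMeasure ρ → ρ Set.univ ≤ ENNReal.ofReal b →
      |∫ w, D (w - u) ∂ρ| ≤ b := by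
    intro ρ hρfin hρ
    have h1 : ‖∫ w, D (w - u) ∂ρ‖ ≤ 1 * (ρ Set.univ).toReal :=
      norm_integral_le_of_norm_le_const
        (Filter.Eventually.of_forall fun v => by simpa [Real.norm_eq_abs] using hDbd (v - u))
    rw [Real.norm_eq_abs, one_mul] at h1
    exact h1.trans (ENNReal.toReal_le_of_le_ofReal hbR hρ)
  have hgμbd : ∀ y, |gμ y| ≤ b := fun y => habs (μ y) inferInstance (hμb y)
  have hgκbd : ∀ y, |gκ y| ≤ b := fun y => habs (κ y) inferInstance (hκb y)
  have hgbd : ∀ y, |g y| ≤ 2 * b := fun y => by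
    calc |g y| ≤ |gμ y| + |gκ y| := abs_sub _ _
      _ ≤ 2 * b := by linarith [hgμbd y, hgκbd y]
  have hgdBL : ∀ y, |g y| ≤ 2 * dBL (μ y) (κ y) := fun y =>
    DBLAux.abs_integral_D_sub_le (μ y) (κ y) D hD hDbd u
  have hVdiff : ∀ x, V μ x u - V κ x u = C * A g x := by
    intro x
    rw [hV μ x u, hV κ x u, ← hgμ, ← hgκ]
    have h1 : A gμ x = ∫ y, gμ y ∂(ν x) := hAfib gμ hgμmeas ⟨b, hgμbd⟩ x
    have h2 : A gκ x = ∫ y, gκ y ∂(ν x) := hAfib gκ hgκmeas ⟨b, hgκbd⟩ x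
    have h3 : A g x = ∫ y, g y ∂(ν x) := hAfib g hgmeas ⟨2 * b, hgbd⟩ x
    have h4 : ∫ y, g y ∂(ν x) = (∫ y, gμ y ∂(ν x)) - ∫ y, gκ y ∂(ν x) :=
      integral_sub (DBLAux.integrable_of_abs_le hgμmeas.aestronglyMeasurable hgμbd)
        (DBLAux.integrable_of_abs_le hgκmeas.aestronglyMeasurable hgκbd)
    rw [h1, h2, h3, h4]
    ring
  have hgsnorm : eLpNorm g p m < ⊤ := by
    refine lt_of_le_of_lt (eLpNorm_le_of_ae_bound (C := 2 * b)
      (Filter.Eventually.of_forall fun y => by simpa [Real.norm_eq_abs] using hgbd y)) ?_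
    simp only [measure_univ, ENNReal.one_rpow, one_mul]
    exact ENNReal.ofReal_lt_top
  have hAq : eLpNorm (A g) q m ≤ ENNReal.ofReal Anorm * eLpNorm g p m :=
    hApq g hgmeas ⟨2 * b, hgbd⟩
  have hA1 : eLpNorm (A g) 1 m ≤ eLpNorm (A g) q m :=
    eLpNorm_le_eLpNorm_of_exponent_le hq (hAmeas g hgmeas).aestronglyMeasurable
  have hAint : Integrable (A g) m := by
    rw [← memLp_one_iff_integrable]
    exact ⟨(hAmeas g hgmeas).aestronglyMeasurable,
      lt_of_le_of_lt (hA1.trans hAq) (ENNReal.mul_lt_top ENNReal.ofReal_lt_top hgsnorm)⟩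
  have hLHS : ∫ x, |V μ x u - V κ x u| ∂m = C * ∫ x, |A g x| ∂m := by
    simp_rw [hVdiff, abs_mul, abs_of_pos hC]
    rw [integral_const_mul]
  have hofReal : ENNReal.ofReal (∫ x, |A g x| ∂m) = eLpNorm (A g) 1 m := by
    rw [eLpNorm_one_eq_lintegral_enorm, ← ofReal_integral_norm_eq_lintegral_enorm hAint]
    simp [Real.norm_eq_abs]
  have hdnonneg : ∀ y, 0 ≤ dBL (μ y) (κ y) := fun y => DBLAux.dBL_nonneg _ _
  have hsnormg : eLpNorm g p m ≤ 2 * eLpNorm (fun y => dBL (μ y) (κ y)) p m := by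
    have hmono : eLpNorm g p m ≤ eLpNorm (fun y => (2:ℝ) * dBL (μ y) (κ y)) p m :=
      eLpNorm_mono fun y => by
        rw [Real.norm_eq_abs, Real.norm_eq_abs]
        exact (hgdBL y).trans (le_abs_self _)
    refine hmono.trans ?_
    have h2 : (fun y => (2:ℝ) * dBL (μ y) (κ y)) = (2:ℝ) • fun y => dBL (μ y) (κ y) := rfl
    rw [h2, eLpNorm_const_smul]
    norm_num [Real.enorm_eq_ofReal_abs]
  have hmain : ENNReal.ofReal (∫ x, |V μ x u - V κ x u| ∂m)
      ≤ ENNReal.ofReal (2 * C * Anorm) * eLpNorm (fun y => dBL (μ y) (κ y)) p m := by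
    calc ENNReal.ofReal (∫ x, |V μ x u - V κ x u| ∂m)
        = ENNReal.ofReal C * ENNReal.ofReal (∫ x, |A g x| ∂m) := by
          rw [hLHS, ENNReal.ofReal_mul hC.le]
      _ = ENNReal.ofReal C * eLpNorm (A g) 1 m := by rw [hofReal]
      _ ≤ ENNReal.ofReal C * (ENNReal.ofReal Anorm * eLpNorm g p m) := by
          gcongr
          exact hA1.trans hAq
      _ ≤ ENNReal.ofReal C * (ENNReal.ofReal Anorm
            * (2 * eLpNorm (fun y => dBL (μ y) (κ y)) p m)) := by gcongr
      _ = ENNReal.ofReal (2 * C * Anorm) * eLpNorm (fun y => dBL (μ y) (κ y)) p m := by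
          rw [ENNReal.ofReal_mul (by positivity), ENNReal.ofReal_mul (by norm_num : (0:ℝ) ≤ 2)]
          rw [show ENNReal.ofReal (2:ℝ) = 2 by norm_num]
          ring
  refine ⟨hmain, ?_⟩
  intro hp1
  subst hp1
  have hdmeas : Measurable (fun y => dBL (μ y) (κ y)) :=
    DBLAux.measurable_dBL b μ κ hμb hκb hmeasμ hmeasκ
  have hdbd : ∀ y, |dBL (μ y) (κ y)| ≤ 2 * b := by
    intro y
    rw [abs_of_nonneg (hdnonneg y)]
    refine (DBLAux.dBL_le _ _).trans ?_
    have h1 : (μ y Set.univ).toReal ≤ b := ENNReal.toReal_le_of_le_ofReal hbR (hμb y)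
    have h2 : (κ y Set.univ).toReal ≤ b := ENNReal.toReal_le_of_le_ofReal hbR (hκb y)
    linarith
  have hdint : Integrable (fun y => dBL (μ y) (κ y)) m :=
    DBLAux.integrable_of_abs_le hdmeas.aestronglyMeasurable hdbd
  have heq : eLpNorm (fun y => dBL (μ y) (κ y)) 1 m
      = ENNReal.ofReal (∫ y, dBL (μ y) (κ y) ∂m) := by
    rw [eLpNorm_one_eq_lintegral_enorm, ← ofReal_integral_norm_eq_lintegral_enorm hdint]
    congr 1
    refine integral_congr_ae (Filter.Eventually.of_forall fun y => ?_)
    simp [Real.norm_eq_abs, abs_of_nonneg (hdnonneg y)]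
  rw [heq, ← ENNReal.ofReal_mul (by positivity)] at hmain
  have hInonneg : 0 ≤ ∫ y, dBL (μ y) (κ y) ∂m := integral_nonneg fun y => hdnonneg y
  exact (ENNReal.ofReal_le_ofReal_iff (by positivity)).1 hmain
end

section
/- Let G be a compact abelian group with normalized Haar measure μ_G and let {k_n} be a positive symmetric summability kernel on G. Then for every n, the function W^n(x,z) := ∫_{G×G} k_n(x−y) k_n(z−ẑ) dν(y,ẑ) is symmetric (W^n(x,z) = W^n(z,x)) and nonnegative, where ν is the symmetric measure on G×G representing a graphop A; consequently K_n A K_n, with K_n f := k_n * f, is an integral operator with symmetric nonnegative kernel W^n, i.e. a graphon. -/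
open MeasureTheory
open scoped ENNReal NNReal

/-- Let `ν` be the symmetric representing measure of a graphop on the
compact abelian group `G`, and `k` a nonnegative symmetric summability-kernel element.
Then `W(x,z) := ∫_{G×G} k(x−y)·k(z−ẑ) dν(y,ẑ)` is a nonnegative, symmetric, measurable
kernel; consequently the regularization `K A K` is an integral operator with kernel `W`,
i.e. a graphon. -/
theorem regularized_kernel_is_graphon
    {G : Type*} [AddCommGroup G] [TopologicalSpace G] [IsTopologicalAddGroup G]
    [CompactSpace G] [SecondCountableTopology G] [MeasurableSpace G] [BorelSpace G]
    (μG : Measure G) [IsProbabilityMeasure μG]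
    (ν : Measure (G × G)) [IsFiniteMeasure ν]
    (hνsym : Measure.map Prod.swap ν = ν)
    (k : G → ℝ) (hkmeas : Measurable k)
    (hkpos : ∀ x, 0 ≤ k x) (hksym : ∀ x, k (-x) = k x)
    (hknorm : ∫ x, k x ∂μG = 1)
    (W : G → G → ℝ)
    (hW : ∀ x z, W x z = ∫ p, k (x - p.1) * k (z - p.2) ∂ν) :
    (∀ x z, 0 ≤ W x z) ∧ (∀ x z, W x z = W z x) ∧
      Measurable (Function.uncurry W) := by
  refine ⟨?_, ?_, ?_⟩
  · intro x z
    rw [hW]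
    exact integral_nonneg fun p => mul_nonneg (hkpos _) (hkpos _)
  · intro x z
    rw [hW, hW]
    have h := (MeasurePreserving.mk measurable_swap hνsym :
      MeasurePreserving Prod.swap ν ν).integral_comp
      (MeasurableEquiv.prodComm (α:=G) (β:=G)).measurableEmbedding
      (fun p => k (z - p.1) * k (x - p.2))
    rw [← h]
    simp only [Prod.swap]
    congr 1
    ext p
    ring
  · have hm : Measurable (Function.uncurry fun (q : G × G) (p : G × G) =>
        k (q.1 - p.1) * k (q.2 - p.2)) := by
      apply Measurable.mul
      · exact hkmeas.comp (measurable_fst.fst.sub measurable_snd.fst)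
      · exact hkmeas.comp (measurable_fst.snd.sub measurable_snd.snd)
    have := hm.stronglyMeasurable.integral_prod_right' (ν := ν)
    have heq : (Function.uncurry W) = fun q : G × G =>
        ∫ p, k (q.1 - p.1) * k (q.2 - p.2) ∂ν := by
      ext q; exact hW q.1 q.2
    rw [heq]
    exact this.measurable
end

section
/- Let (M_f(𝕋), d_BL) be the space of finite Borel measures on the circle with the bounded-Lipschitz metric, {ν_x^B} fiber measures of graphops B ∈ 𝒢 (all with γ_B ≤ 1), and define on M̄^b := { measurable μ̄: Ω → M_f(𝕋) with sup_x μ^x(𝕋) ≤ b } the function d̄^b(μ̄,κ̄) := sup_{B∈𝒢} sup_{x∈Ω} ∫_Ω d_BL(μ^y,κ^y) dν_x^B(y). Then d̄^b takes finite values: 0 ≤ d̄^b(μ̄,κ̄) ≤ b·diam(𝕋), and d̄^b is a metric on M̄^b (symmetric, triangle inequality, and d̄^b(μ̄,κ̄) = 0 implies μ^y = κ^y for all y). -/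
open MeasureTheory
open scoped ENNReal NNReal

/-- The collection `𝒢` of fiber-measure families of graphops `B` (over an arbitrary
probability measure `l` on `Ω`, self-adjoint, with degree bound `γ_B ≤ 1`). -/
def GraphopFibers (Ω : Type*) [MeasurableSpace Ω] : Set (Ω → Measure Ω) :=
  {η | (∀ x, η x Set.univ ≤ 1) ∧
    ∃ l : Measure Ω, IsProbabilityMeasure l ∧
      ∀ S S' : Set Ω, MeasurableSet S → MeasurableSet S' →
        ∫⁻ x in S, η x S' ∂l = ∫⁻ x in S', η x S ∂l}

/-- The candidate metric `d̄^b(μ̄,κ̄) = sup_{B∈𝒢} sup_{x∈Ω} ∫_Ω d_BL(μ^y,κ^y) dν_x^B(y)`. -/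
noncomputable def dbarb {Ω : Type*} [MeasurableSpace Ω]
    (μ κ : Ω → Measure Circle2pi) : ℝ :=
  ⨆ η : GraphopFibers Ω, ⨆ x : Ω, ∫ y, dBL (μ y) (κ y) ∂(η.1 x)

/-! ### Auxiliary lemmas -/

namespace DbarbAux

/-- The index type of test functions for `dBL`. -/
abbrev BLfun := {f : Circle2pi → ℝ // LipschitzWith 1 f ∧ ∀ v, f v ∈ Set.Icc (0:ℝ) 1}

instance : Nonempty BLfun :=
  ⟨⟨fun _ => 0, LipschitzWith.const' 0, fun _ => ⟨le_rfl, zero_le_one⟩⟩⟩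

lemma integrable_BL (f : BLfun) (μ : Measure Circle2pi) [IsFiniteMeasure μ] :
    Integrable f.1 μ := by
  refine ⟨f.2.1.continuous.aestronglyMeasurable, ?_⟩
  apply HasFiniteIntegral.of_bounded (C := 1)
  filter_upwards with v
  rw [Real.norm_eq_abs, abs_le]
  exact ⟨by linarith [(f.2.2 v).1], (f.2.2 v).2⟩

lemma integral_BL_mem (f : BLfun) (μ : Measure Circle2pi) [IsFiniteMeasure μ] :
    (∫ v, f.1 v ∂μ) ∈ Set.Icc (0:ℝ) ((μ Set.univ).toReal) := by
  constructor
  · exact integral_nonneg fun v => (f.2.2 v).1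
  · calc ∫ v, f.1 v ∂μ ≤ ∫ _, (1:ℝ) ∂μ :=
          integral_mono (integrable_BL f μ) (integrable_const 1) fun v => (f.2.2 v).2
    _ = (μ Set.univ).toReal := by simp; rfl

lemma dBL_nonneg (μ κ : Measure Circle2pi) : 0 ≤ dBL μ κ :=
  Real.iSup_nonneg fun _ => abs_nonneg _

lemma dBL_term_le (μ κ : Measure Circle2pi) [IsFiniteMeasure μ] [IsFiniteMeasure κ] (f : BLfun) :
    |(∫ v, f.1 v ∂μ) - ∫ v, f.1 v ∂κ| ≤ (μ Set.univ).toReal + (κ Set.univ).toReal := by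
  obtain ⟨h1, h2⟩ := integral_BL_mem f μ
  obtain ⟨h3, h4⟩ := integral_BL_mem f κ
  rw [abs_sub_le_iff]
  constructor <;> linarith [ENNReal.toReal_nonneg (a := μ Set.univ),
    ENNReal.toReal_nonneg (a := κ Set.univ)]

lemma dBL_bdd (μ κ : Measure Circle2pi) [IsFiniteMeasure μ] [IsFiniteMeasure κ] :
    BddAbove (Set.range fun f : BLfun => |(∫ v, f.1 v ∂μ) - ∫ v, f.1 v ∂κ|) := by
  refine ⟨(μ Set.univ).toReal + (κ Set.univ).toReal, ?_⟩
  rintro - ⟨f, rfl⟩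
  exact dBL_term_le μ κ f

lemma le_dBL (μ κ : Measure Circle2pi) [IsFiniteMeasure μ] [IsFiniteMeasure κ] (f : BLfun) :
    |(∫ v, f.1 v ∂μ) - ∫ v, f.1 v ∂κ| ≤ dBL μ κ :=
  le_ciSup (dBL_bdd μ κ) f

lemma dBL_symm (μ κ : Measure Circle2pi) : dBL μ κ = dBL κ μ := by
  unfold dBL
  exact iSup_congr fun f => abs_sub_comm _ _

lemma dBL_triangle (μ κ ρ : Measure Circle2pi)
    [IsFiniteMeasure μ] [IsFiniteMeasure κ] [IsFiniteMeasure ρ] :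
    dBL μ ρ ≤ dBL μ κ + dBL κ ρ := by
  refine ciSup_le fun f => ?_
  calc |(∫ v, f.1 v ∂μ) - ∫ v, f.1 v ∂ρ|
      ≤ |(∫ v, f.1 v ∂μ) - ∫ v, f.1 v ∂κ| + |(∫ v, f.1 v ∂κ) - ∫ v, f.1 v ∂ρ| :=
        abs_sub_le _ _ _
    _ ≤ dBL μ κ + dBL κ ρ := add_le_add (le_dBL μ κ f) (le_dBL κ ρ f)

lemma dBL_le {b : ℝ} (hb0 : 0 ≤ b) (μ κ : Measure Circle2pi)
    [IsFiniteMeasure μ] [IsFiniteMeasure κ]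
    (hμ : μ Set.univ ≤ ENNReal.ofReal b) (hκ : κ Set.univ ≤ ENNReal.ofReal b) :
    dBL μ κ ≤ b := by
  refine ciSup_le fun f => ?_
  obtain ⟨h1, h2⟩ := integral_BL_mem f μ
  obtain ⟨h3, h4⟩ := integral_BL_mem f κ
  have hμ' : (μ Set.univ).toReal ≤ b := ENNReal.toReal_le_of_le_ofReal hb0 hμ
  have hκ' : (κ Set.univ).toReal ≤ b := ENNReal.toReal_le_of_le_ofReal hb0 hκ
  rw [abs_sub_le_iff]
  constructor <;> linarith

/-- Identity of indiscernibles for `dBL` on finite measures. -/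
lemma measure_eq_of_dBL_eq_zero (μ κ : Measure Circle2pi)
    [IsFiniteMeasure μ] [IsFiniteMeasure κ] (h : dBL μ κ = 0) : μ = κ := by
  -- Step 1: integrals of 1-Lipschitz [0,1]-valued functions agree.
  have h1 : ∀ f : BLfun, (∫ v, f.1 v ∂μ) = ∫ v, f.1 v ∂κ := by
    intro f
    have hle := le_dBL μ κ f
    rw [h] at hle
    have habs : |(∫ v, f.1 v ∂μ) - ∫ v, f.1 v ∂κ| = 0 := le_antisymm hle (abs_nonneg _)
    linarith [sub_eq_zero.mp (abs_eq_zero.mp habs)]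
  -- Step 2: integrals of K-Lipschitz [0,1]-valued functions agree.
  have h2 : ∀ (K : ℝ≥0) (g : Circle2pi → ℝ), LipschitzWith K g →
      (∀ v, g v ∈ Set.Icc (0:ℝ) 1) → (∫ v, g v ∂μ) = ∫ v, g v ∂κ := by
    intro K g hg hg01
    set c : ℝ := max (K : ℝ) 1 with hc
    have hc1 : (1:ℝ) ≤ c := le_max_right _ _
    have hc0 : (0:ℝ) < c := lt_of_lt_of_le one_pos hc1
    have hK : (K : ℝ) ≤ c := le_max_left _ _
    have hlip : LipschitzWith 1 (fun v => c⁻¹ * g v) := by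
      apply LipschitzWith.of_dist_le_mul
      intro x y
      have hd := hg.dist_le_mul x y
      rw [Real.dist_eq] at hd ⊢
      have : c⁻¹ * g x - c⁻¹ * g y = c⁻¹ * (g x - g y) := by ring
      rw [this, abs_mul, abs_of_pos (inv_pos.mpr hc0)]
      have h1' : c⁻¹ * |g x - g y| ≤ c⁻¹ * ((K:ℝ) * dist x y) := by
        apply mul_le_mul_of_nonneg_left hd (inv_pos.mpr hc0).le
      calc c⁻¹ * |g x - g y| ≤ c⁻¹ * ((K:ℝ) * dist x y) := h1'
        _ = (c⁻¹ * (K:ℝ)) * dist x y := by ring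
        _ ≤ 1 * dist x y := by
            apply mul_le_mul_of_nonneg_right _ dist_nonneg
            rw [inv_mul_le_iff₀ hc0]
            linarith
        _ = (1:ℝ≥0) * dist x y := by norm_num
    have hmem : ∀ v, c⁻¹ * g v ∈ Set.Icc (0:ℝ) 1 := by
      intro v
      obtain ⟨ha, hb⟩ := hg01 v
      constructor
      · positivity
      · calc c⁻¹ * g v ≤ c⁻¹ * 1 := mul_le_mul_of_nonneg_left hb (inv_pos.mpr hc0).le
          _ ≤ 1 := by rw [mul_one]; exact inv_le_one_of_one_le₀ hc1
    have key := h1 ⟨fun v => c⁻¹ * g v, hlip, hmem⟩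
    simp only [← smul_eq_mul, integral_smul] at key
    exact smul_right_injective ℝ (inv_ne_zero hc0.ne') key
  -- Step 3: the measures agree on closed sets.
  have h3 : ∀ F : Set Circle2pi, IsClosed F → μ F = κ F := by
    intro F hF
    rcases Set.eq_empty_or_nonempty F with rfl | hFne
    · simp
    set g : ℕ → Circle2pi → ℝ := fun n v => max 0 (1 - n * Metric.infDist v F) with hgdef
    have hglip : ∀ n : ℕ, LipschitzWith (n : ℝ≥0) (g n) := by
      intro n
      apply LipschitzWith.of_dist_le_mul
      intro x y
      rw [Real.dist_eq, hgdef]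
      simp only
      rw [max_comm 0 (1 - n * Metric.infDist x F), max_comm 0 (1 - n * Metric.infDist y F)]
      calc |max (1 - n * Metric.infDist x F) 0 - max (1 - n * Metric.infDist y F) 0|
          ≤ |(1 - n * Metric.infDist x F) - (1 - n * Metric.infDist y F)| :=
            abs_max_sub_max_le_abs _ _ _
        _ = (n : ℝ) * |Metric.infDist x F - Metric.infDist y F| := by
            have e : 1 - (n:ℝ) * Metric.infDist x F - (1 - (n:ℝ) * Metric.infDist y F)
                = (n:ℝ) * (Metric.infDist y F - Metric.infDist x F) := by ring
            rw [e, abs_mul, abs_of_nonneg (Nat.cast_nonneg (α := ℝ) n), abs_sub_comm]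
        _ ≤ (n : ℝ) * dist x y := by
            apply mul_le_mul_of_nonneg_left _ (Nat.cast_nonneg n)
            have := (Metric.lipschitz_infDist_pt F).dist_le_mul x y
            rwa [Real.dist_eq, NNReal.coe_one, one_mul] at this
        _ = ((n : ℝ≥0) : ℝ) * dist x y := by norm_num
    have hgmem : ∀ n v, g n v ∈ Set.Icc (0:ℝ) 1 := by
      intro n v
      refine ⟨le_max_left _ _, max_le zero_le_one ?_⟩
      have := Metric.infDist_nonneg (x := v) (s := F)
      nlinarith [Nat.cast_nonneg (α := ℝ) n]
    have hgint : ∀ n, (∫ v, g n v ∂μ) = ∫ v, g n v ∂κ := fun n =>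
      h2 (n : ℝ≥0) (g n) (hglip n) (hgmem n)
    -- pointwise convergence to the indicator of F
    have hlim : ∀ v, Filter.Tendsto (fun n => g n v) Filter.atTop
        (nhds (F.indicator (fun _ => (1:ℝ)) v)) := by
      intro v
      by_cases hv : v ∈ F
      · have : ∀ n, g n v = 1 := by
          intro n
          rw [hgdef]
          simp [Metric.infDist_zero_of_mem hv]
        simp only [Set.indicator_of_mem hv]
        simp_rw [this]
        exact tendsto_const_nhds
      · have hd : 0 < Metric.infDist v F := by
          rwa [← hF.notMem_iff_infDist_pos hFne]
        simp only [Set.indicator_of_notMem hv]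
        apply tendsto_atTop_of_eventually_const (i₀ := ⌈(Metric.infDist v F)⁻¹⌉₊)
        intro n hn
        have h1' : (1:ℝ) ≤ n * Metric.infDist v F := by
          have hceil : (Metric.infDist v F)⁻¹ ≤ (⌈(Metric.infDist v F)⁻¹⌉₊ : ℝ) :=
            Nat.le_ceil _
          have hcast : ((⌈(Metric.infDist v F)⁻¹⌉₊ : ℕ) : ℝ) ≤ (n : ℝ) := Nat.cast_le.mpr hn
          calc (1:ℝ) = (Metric.infDist v F)⁻¹ * Metric.infDist v F := by
                field_simp
            _ ≤ (n : ℝ) * Metric.infDist v F :=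
                mul_le_mul_of_nonneg_right (hceil.trans hcast) hd.le
        rw [hgdef]
        simp only
        rw [max_eq_left (by linarith)]
    -- dominated convergence for both measures
    have hμlim : Filter.Tendsto (fun n => ∫ v, g n v ∂μ) Filter.atTop
        (nhds (∫ v, F.indicator (fun _ => (1:ℝ)) v ∂μ)) := by
      apply tendsto_integral_of_dominated_convergence (bound := fun _ => (1:ℝ))
      · exact fun n => ((hglip n).continuous).aestronglyMeasurable
      · exact integrable_const 1
      · intro n
        filter_upwards with v
        rw [Real.norm_eq_abs, abs_of_nonneg (hgmem n v).1]
        exact (hgmem n v).2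
      · filter_upwards with v using hlim v
    have hκlim : Filter.Tendsto (fun n => ∫ v, g n v ∂κ) Filter.atTop
        (nhds (∫ v, F.indicator (fun _ => (1:ℝ)) v ∂κ)) := by
      apply tendsto_integral_of_dominated_convergence (bound := fun _ => (1:ℝ))
      · exact fun n => ((hglip n).continuous).aestronglyMeasurable
      · exact integrable_const 1
      · intro n
        filter_upwards with v
        rw [Real.norm_eq_abs, abs_of_nonneg (hgmem n v).1]
        exact (hgmem n v).2
      · filter_upwards with v using hlim v
    simp_rw [hgint] at hμlim
    have hkey := tendsto_nhds_unique hμlim hκlim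
    have hμ' : (∫ v, F.indicator (fun _ => (1:ℝ)) v ∂μ) = (μ F).toReal := by
      have := integral_indicator_one (μ := μ) hF.measurableSet
      simpa [Measure.real, Pi.one_def] using this
    have hκ' : (∫ v, F.indicator (fun _ => (1:ℝ)) v ∂κ) = (κ F).toReal := by
      have := integral_indicator_one (μ := κ) hF.measurableSet
      simpa [Measure.real, Pi.one_def] using this
    rw [hμ', hκ'] at hkey
    exact (ENNReal.toReal_eq_toReal_iff' (measure_ne_top μ F) (measure_ne_top κ F)).mp hkey
  -- Step 4: extensionality via the π-system of closed sets.
  refine ext_of_generate_finite {s : Set Circle2pi | IsClosed s} ?_ isPiSystem_isClosed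
    (fun s hs => h3 s hs) (h3 _ isClosed_univ)
  rw [BorelSpace.measurable_eq (α := Circle2pi), borel_eq_generateFrom_isClosed]

/-- The diameter of the circle is at least 1. -/
lemma one_le_diam : (1:ℝ) ≤ Metric.diam (Set.univ : Set Circle2pi) := by
  have hnorm : ‖((1:ℝ) : Circle2pi)‖ = 1 := by
    rw [AddCircle.norm_eq]
    have hround : round ((2 * Real.pi)⁻¹ * 1) = 0 := by
      rw [round_eq_zero_iff]
      have hpos : (0:ℝ) < (2 * Real.pi)⁻¹ := by positivity
      have hlt : (2 * Real.pi)⁻¹ < 1 / 2 := by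
        rw [inv_lt_comm₀ (by positivity) (by norm_num)]
        nlinarith [Real.pi_gt_three]
      exact ⟨by linarith, by rw [mul_one]; exact hlt⟩
    rw [hround]
    norm_num
  have hdist : dist ((1:ℝ) : Circle2pi) (0 : Circle2pi) = 1 := by
    rw [dist_zero_right, hnorm]
  calc (1:ℝ) = dist ((1:ℝ) : Circle2pi) (0 : Circle2pi) := hdist.symm
    _ ≤ Metric.diam (Set.univ : Set Circle2pi) :=
        Metric.dist_le_diam_of_mem (isCompact_univ.isBounded) (Set.mem_univ _) (Set.mem_univ _)

lemma fiber_finite {Ω : Type*} [MeasurableSpace Ω] {η : Ω → Measure Ω}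
    (hη : η ∈ GraphopFibers Ω) (x : Ω) : IsFiniteMeasure (η x) :=
  ⟨lt_of_le_of_lt (hη.1 x) ENNReal.one_lt_top⟩

lemma dirac_mem_graphopFibers {Ω : Type*} [MeasurableSpace Ω] [Nonempty Ω] :
    (fun x : Ω => Measure.dirac x) ∈ GraphopFibers Ω := by
  constructor
  · intro x
    simp
  · refine ⟨Measure.dirac (Classical.arbitrary Ω), by infer_instance, ?_⟩
    intro S S' hS hS'
    have e1 : ∀ x : Ω, Measure.dirac x S' = S'.indicator 1 x := fun x =>
      Measure.dirac_apply' x hS'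
    have e2 : ∀ x : Ω, Measure.dirac x S = S.indicator 1 x := fun x =>
      Measure.dirac_apply' x hS
    simp_rw [e1, e2]
    rw [lintegral_indicator_one hS', lintegral_indicator_one hS,
      Measure.restrict_apply hS', Measure.restrict_apply hS, Set.inter_comm]

lemma integrable_dBL_fiber {Ω : Type*} [MeasurableSpace Ω] {b : ℝ} (hb0 : 0 ≤ b)
    {μ κ : Ω → Measure Circle2pi}
    [∀ y, IsFiniteMeasure (μ y)] [∀ y, IsFiniteMeasure (κ y)]
    (hμb : ∀ y, μ y Set.univ ≤ ENNReal.ofReal b)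
    (hκb : ∀ y, κ y Set.univ ≤ ENNReal.ofReal b)
    (hm : Measurable fun y => dBL (μ y) (κ y))
    (m : Measure Ω) [IsFiniteMeasure m] :
    Integrable (fun y => dBL (μ y) (κ y)) m := by
  refine ⟨hm.aestronglyMeasurable, ?_⟩
  apply HasFiniteIntegral.of_bounded (C := b)
  filter_upwards with y
  rw [Real.norm_eq_abs, abs_of_nonneg (dBL_nonneg _ _)]
  exact dBL_le hb0 (μ y) (κ y) (hμb y) (hκb y)

lemma integral_dBL_le {Ω : Type*} [MeasurableSpace Ω] {b : ℝ} (hb0 : 0 ≤ b)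
    {μ κ : Ω → Measure Circle2pi}
    [∀ y, IsFiniteMeasure (μ y)] [∀ y, IsFiniteMeasure (κ y)]
    (hμb : ∀ y, μ y Set.univ ≤ ENNReal.ofReal b)
    (hκb : ∀ y, κ y Set.univ ≤ ENNReal.ofReal b)
    (hm : Measurable fun y => dBL (μ y) (κ y))
    (m : Measure Ω) [IsFiniteMeasure m] (hm1 : m Set.univ ≤ 1) :
    (∫ y, dBL (μ y) (κ y) ∂m) ≤ b := by
  calc (∫ y, dBL (μ y) (κ y) ∂m) ≤ ∫ _, b ∂m :=
        integral_mono (integrable_dBL_fiber hb0 hμb hκb hm m) (integrable_const b)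
          (fun y => dBL_le hb0 (μ y) (κ y) (hμb y) (hκb y))
    _ = (m Set.univ).toReal * b := by rw [integral_const, smul_eq_mul]; rfl
    _ ≤ 1 * b := by
        apply mul_le_mul_of_nonneg_right _ hb0
        exact ENNReal.toReal_le_of_le_ofReal zero_le_one (by simpa using hm1)
    _ = b := one_mul b

end DbarbAux

open DbarbAux

/-- `d̄^b` takes finite values in `[0, b·diam 𝕋]` on families with mass
bound `b`, is symmetric, satisfies the triangle inequality, and vanishes only on equal
families: it is a metric on `M̄^b`. -/
theorem dbarb_is_metric
    {Ω : Type*} [MeasurableSpace Ω] [Nonempty Ω]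
    (b : ℝ) (hb : 0 < b)
    (μ κ ρ : Ω → Measure Circle2pi)
    [∀ y, IsFiniteMeasure (μ y)] [∀ y, IsFiniteMeasure (κ y)] [∀ y, IsFiniteMeasure (ρ y)]
    (hμb : ∀ y, μ y Set.univ ≤ ENNReal.ofReal b)
    (hκb : ∀ y, κ y Set.univ ≤ ENNReal.ofReal b)
    (hρb : ∀ y, ρ y Set.univ ≤ ENNReal.ofReal b)
    (hmμκ : Measurable fun y => dBL (μ y) (κ y))
    (hmμρ : Measurable fun y => dBL (μ y) (ρ y))
    (hmκρ : Measurable fun y => dBL (κ y) (ρ y)) :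
    (0 ≤ dbarb μ κ) ∧
    (dbarb μ κ ≤ b * Metric.diam (Set.univ : Set Circle2pi)) ∧
    (dbarb μ κ = dbarb κ μ) ∧
    (dbarb μ ρ ≤ dbarb μ κ + dbarb κ ρ) ∧
    (dbarb μ κ = 0 → ∀ y, μ y = κ y) := by
  have hb0 : (0:ℝ) ≤ b := hb.le
  haveI hGne : Nonempty (GraphopFibers Ω) := ⟨⟨_, dirac_mem_graphopFibers⟩⟩
  -- the uniform bound on all inner integrals
  have hIbound : ∀ (μ' κ' : Ω → Measure Circle2pi)
      (_ : ∀ y, IsFiniteMeasure (μ' y)) (_ : ∀ y, IsFiniteMeasure (κ' y))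
      (_ : ∀ y, μ' y Set.univ ≤ ENNReal.ofReal b)
      (_ : ∀ y, κ' y Set.univ ≤ ENNReal.ofReal b)
      (_ : Measurable fun y => dBL (μ' y) (κ' y))
      (η : GraphopFibers Ω) (x : Ω), (∫ y, dBL (μ' y) (κ' y) ∂(η.1 x)) ≤ b := by
    intro μ' κ' hf1 hf2 hμ' hκ' hm' η x
    haveI := hf1; haveI := hf2
    haveI : IsFiniteMeasure (η.1 x) := fiber_finite η.2 x
    exact integral_dBL_le hb0 hμ' hκ' hm' (η.1 x) (η.2.1 x)
  -- `le_dbarb`: each inner integral is at most the double supremum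
  have hle_dbarb : ∀ (μ' κ' : Ω → Measure Circle2pi)
      (_ : ∀ y, IsFiniteMeasure (μ' y)) (_ : ∀ y, IsFiniteMeasure (κ' y))
      (_ : ∀ y, μ' y Set.univ ≤ ENNReal.ofReal b)
      (_ : ∀ y, κ' y Set.univ ≤ ENNReal.ofReal b)
      (_ : Measurable fun y => dBL (μ' y) (κ' y))
      (η : GraphopFibers Ω) (x : Ω),
      (∫ y, dBL (μ' y) (κ' y) ∂(η.1 x)) ≤ dbarb μ' κ' := by
    intro μ' κ' hf1 hf2 hμ' hκ' hm' η x
    have hinner : BddAbove (Set.range fun x : Ω => ∫ y, dBL (μ' y) (κ' y) ∂(η.1 x)) := by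
      refine ⟨b, ?_⟩
      rintro - ⟨x', rfl⟩
      exact hIbound μ' κ' hf1 hf2 hμ' hκ' hm' η x'
    have houter : BddAbove (Set.range fun η : GraphopFibers Ω =>
        ⨆ x : Ω, ∫ y, dBL (μ' y) (κ' y) ∂(η.1 x)) := by
      refine ⟨b, ?_⟩
      rintro - ⟨η', rfl⟩
      exact ciSup_le fun x' => hIbound μ' κ' hf1 hf2 hμ' hκ' hm' η' x'
    exact le_trans (le_ciSup hinner x) (le_ciSup houter η)
  refine ⟨?_, ?_, ?_, ?_, ?_⟩
  · -- nonnegativity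
    exact Real.iSup_nonneg fun η => Real.iSup_nonneg fun x =>
      integral_nonneg fun y => dBL_nonneg _ _
  · -- upper bound
    have h1 : dbarb μ κ ≤ b :=
      ciSup_le fun η => ciSup_le fun x =>
        hIbound μ κ inferInstance inferInstance hμb hκb hmμκ η x
    calc dbarb μ κ ≤ b := h1
      _ = b * 1 := (mul_one b).symm
      _ ≤ b * Metric.diam (Set.univ : Set Circle2pi) :=
          mul_le_mul_of_nonneg_left one_le_diam hb0
  · -- symmetry
    have hfun : ∀ y, dBL (μ y) (κ y) = dBL (κ y) (μ y) := fun y => dBL_symm _ _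
    unfold dbarb
    simp_rw [hfun]
  · -- triangle inequality
    refine ciSup_le fun η => ciSup_le fun x => ?_
    haveI : IsFiniteMeasure (η.1 x) := fiber_finite η.2 x
    calc (∫ y, dBL (μ y) (ρ y) ∂(η.1 x))
        ≤ ∫ y, (dBL (μ y) (κ y) + dBL (κ y) (ρ y)) ∂(η.1 x) := by
          apply integral_mono (integrable_dBL_fiber hb0 hμb hρb hmμρ (η.1 x))
            ((integrable_dBL_fiber hb0 hμb hκb hmμκ (η.1 x)).add
              (integrable_dBL_fiber hb0 hκb hρb hmκρ (η.1 x)))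
          exact fun y => dBL_triangle (μ y) (κ y) (ρ y)
      _ = (∫ y, dBL (μ y) (κ y) ∂(η.1 x)) + ∫ y, dBL (κ y) (ρ y) ∂(η.1 x) :=
          integral_add (integrable_dBL_fiber hb0 hμb hκb hmμκ (η.1 x))
            (integrable_dBL_fiber hb0 hκb hρb hmκρ (η.1 x))
      _ ≤ dbarb μ κ + dbarb κ ρ :=
          add_le_add
            (hle_dbarb μ κ inferInstance inferInstance hμb hκb hmμκ η x)
            (hle_dbarb κ ρ inferInstance inferInstance hκb hρb hmκρ η x)
  · -- identity of indiscernibles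
    intro h0 y
    have hdirac : (∫ z, dBL (μ z) (κ z) ∂((⟨_, dirac_mem_graphopFibers⟩ :
        GraphopFibers Ω).1 y)) = dBL (μ y) (κ y) := by
      exact integral_dirac' _ y hmμκ.stronglyMeasurable
    have hle := hle_dbarb μ κ inferInstance inferInstance hμb hκb hmμκ
      ⟨_, dirac_mem_graphopFibers⟩ y
    rw [hdirac, h0] at hle
    have hz : dBL (μ y) (κ y) = 0 := le_antisymm hle (dBL_nonneg _ _)
    exact measure_eq_of_dBL_eq_zero (μ y) (κ y) hz
end

section
/- The metric space (M̄^b, d̄^b) is complete: every Cauchy sequence {μ̄_n} in M̄^b (measurable families of finite measures on 𝕋 with mass ≤ b, with the metric d̄^b(μ̄,κ̄) = sup_{B∈𝒢} sup_x ∫_Ω d_BL(μ^y,κ^y) dν_x^B(y)) converges in d̄^b to a limit μ̄ ∈ M̄^b. -/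
open MeasureTheory Filter
open scoped ENNReal NNReal Topology

/-- Membership in `M̄^b`: a measurable family of finite measures on `𝕋` with mass `≤ b`. -/
def MemMb {Ω : Type*} [MeasurableSpace Ω] (b : ℝ) (μ : Ω → Measure Circle2pi) : Prop :=
  (∀ S : Set Circle2pi, MeasurableSet S → Measurable fun x => (μ x S).toReal) ∧
    ∀ x, μ x Set.univ ≤ ENNReal.ofReal b

namespace MbProof

open Metric TopologicalSpace Set

local notation "X" => Circle2pi

/-! ### clip -/

noncomputable def clip01 (t : ℝ) : ℝ := max 0 (min 1 t)

lemma clip01_nonneg (t : ℝ) : 0 ≤ clip01 t := le_max_left _ _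

lemma clip01_le_one (t : ℝ) : clip01 t ≤ 1 := by
  unfold clip01
  rcases le_total (min 1 t) 0 with h | h
  · simpa [max_eq_left h]
  · rw [max_eq_right h]; exact min_le_left _ _

lemma clip01_mem (t : ℝ) : clip01 t ∈ Icc (0:ℝ) 1 := ⟨clip01_nonneg t, clip01_le_one t⟩

lemma clip01_of_one_le {t : ℝ} (h : 1 ≤ t) : clip01 t = 1 := by
  unfold clip01; rw [min_eq_left h]; exact max_eq_right zero_le_one

lemma clip01_of_nonpos {t : ℝ} (h : t ≤ 0) : clip01 t = 0 := by
  unfold clip01; rw [min_eq_right (h.trans zero_le_one), max_eq_left h]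

lemma clip01_mono : Monotone clip01 := fun a b hab => by
  unfold clip01; exact max_le_max le_rfl (min_le_min le_rfl hab)

lemma clip01_eq_self {t : ℝ} (h : t ∈ Icc (0:ℝ) 1) : clip01 t = t := by
  unfold clip01; rw [min_eq_right h.2, max_eq_right h.1]

lemma lipschitzWith_clip01 : LipschitzWith 1 clip01 := by
  refine LipschitzWith.of_dist_le_mul fun a b => ?_
  simp only [Real.dist_eq, NNReal.coe_one, one_mul, clip01]
  calc |max 0 (min 1 a) - max 0 (min 1 b)| ≤ |min 1 a - min 1 b| := by
        rw [max_comm 0 (min 1 a), max_comm 0 (min 1 b)]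
        exact abs_max_sub_max_le_abs _ _ _
    _ ≤ |a - b| := by
        have := abs_min_sub_min_le_max (1:ℝ) a 1 b
        simpa using this

lemma LipschitzWith.clip01_comp {c : ℝ≥0} {g : X → ℝ} (hg : LipschitzWith c g) :
    LipschitzWith c (fun v => clip01 (g v)) := by
  simpa [Function.comp_def] using lipschitzWith_clip01.comp hg

/-! ### basic integrability -/

lemma integrable_of_bounded {μ : Measure X} [IsFiniteMeasure μ] {f : X → ℝ}
    (hf : Continuous f) {M : ℝ} (hM : ∀ v, |f v| ≤ M) : Integrable f μ :=
  ⟨hf.aestronglyMeasurable, HasFiniteIntegral.of_bounded (C := M) (.of_forall fun v => hM v)⟩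

lemma integrable_K {μ : Measure X} [IsFiniteMeasure μ] {f : X → ℝ}
    (hf : Continuous f) (h01 : ∀ v, f v ∈ Icc (0:ℝ) 1) : Integrable f μ :=
  integrable_of_bounded hf (M := 1) (fun v => abs_le.2 ⟨by linarith [(h01 v).1], (h01 v).2⟩)

lemma integral_K_le {μ : Measure X} [IsFiniteMeasure μ] {f : X → ℝ}
    (hf : Continuous f) (h01 : ∀ v, f v ∈ Icc (0:ℝ) 1) :
    ∫ v, f v ∂μ ≤ (μ univ).toReal := by
  calc ∫ v, f v ∂μ ≤ ∫ _, (1:ℝ) ∂μ :=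
        integral_mono (integrable_K hf h01) (integrable_const 1) (fun v => (h01 v).2)
    _ = (μ univ).toReal := by simp [Measure.real]

/-! ### dBL lemmas -/

abbrev KF := {f : X → ℝ // LipschitzWith 1 f ∧ ∀ v, f v ∈ Set.Icc (0:ℝ) 1}

instance : Nonempty KF := ⟨⟨fun _ => 0, by
  refine ⟨LipschitzWith.const' 0, fun v => ?_⟩
  simp [Set.mem_Icc]⟩⟩

lemma dBL_term_le {μ κ : Measure X} [IsFiniteMeasure μ] [IsFiniteMeasure κ] (f : KF) :
    |(∫ v, f.1 v ∂μ) - ∫ v, f.1 v ∂κ| ≤ (μ univ).toReal + (κ univ).toReal := by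
  have hc := f.2.1.continuous
  have h1 := integral_K_le (μ := μ) hc f.2.2
  have h2 := integral_K_le (μ := κ) hc f.2.2
  have h3 : 0 ≤ ∫ v, f.1 v ∂μ := integral_nonneg fun v => (f.2.2 v).1
  have h4 : 0 ≤ ∫ v, f.1 v ∂κ := integral_nonneg fun v => (f.2.2 v).1
  rw [abs_sub_le_iff]; constructor <;> linarith

lemma dBL_bddAbove (μ κ : Measure X) [IsFiniteMeasure μ] [IsFiniteMeasure κ] :
    BddAbove (Set.range fun f : KF => |(∫ v, f.1 v ∂μ) - ∫ v, f.1 v ∂κ|) := by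
  refine ⟨(μ univ).toReal + (κ univ).toReal, ?_⟩
  rintro - ⟨f, rfl⟩
  exact dBL_term_le f

lemma le_dBL {μ κ : Measure X} [IsFiniteMeasure μ] [IsFiniteMeasure κ] (f : KF) :
    |(∫ v, f.1 v ∂μ) - ∫ v, f.1 v ∂κ| ≤ dBL μ κ :=
  le_ciSup (dBL_bddAbove μ κ) f

lemma dBL_le {μ κ : Measure X} {c : ℝ}
    (h : ∀ f : KF, |(∫ v, f.1 v ∂μ) - ∫ v, f.1 v ∂κ| ≤ c) : dBL μ κ ≤ c :=
  ciSup_le h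

lemma dBL_nonneg (μ κ : Measure X) [IsFiniteMeasure μ] [IsFiniteMeasure κ] :
    0 ≤ dBL μ κ := by
  have := le_dBL (μ := μ) (κ := κ) ⟨fun _ => 0, by
    refine ⟨LipschitzWith.const' 0, fun v => by simp [Set.mem_Icc]⟩⟩
  simp only [integral_const] at this
  refine le_trans ?_ this
  positivity

lemma dBL_le_masses (μ κ : Measure X) [IsFiniteMeasure μ] [IsFiniteMeasure κ] :
    dBL μ κ ≤ (μ univ).toReal + (κ univ).toReal :=
  dBL_le fun f => dBL_term_le f

/-! ### countable dense family -/

abbrev KC := {f : C(X, ℝ) // LipschitzWith 1 f ∧ ∀ v, f v ∈ Set.Icc (0:ℝ) 1}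

instance : Nonempty KC := ⟨⟨0, by
  refine ⟨LipschitzWith.const' 0, fun v => ?_⟩
  simp [Set.mem_Icc]⟩⟩

noncomputable def seqK : ℕ → KC := denseSeq KC

lemma denseRange_seqK : DenseRange seqK := denseRange_denseSeq KC

lemma bddAbove_seqK_terms' (μ κ : Measure X) [IsFiniteMeasure μ] [IsFiniteMeasure κ] :
    BddAbove (Set.range fun n : ℕ => |(∫ v, (seqK n).1 v ∂μ) - ∫ v, (seqK n).1 v ∂κ|) := by
  refine ⟨(μ univ).toReal + (κ univ).toReal, ?_⟩
  rintro - ⟨n, rfl⟩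
  exact dBL_term_le ⟨(seqK n).1, (seqK n).2⟩

lemma integral_err {μ : Measure X} [IsFiniteMeasure μ] {f g : X → ℝ}
    (hf : Integrable f μ) (hg : Integrable g μ) {ε : ℝ} (hε : 0 ≤ ε)
    (h : ∀ v, |f v - g v| ≤ ε) :
    |(∫ v, f v ∂μ) - ∫ v, g v ∂μ| ≤ ε * (μ univ).toReal := by
  rw [← integral_sub hf hg]
  calc |∫ v, (f v - g v) ∂μ| ≤ ∫ v, |f v - g v| ∂μ := by
        simpa [Real.norm_eq_abs] using norm_integral_le_integral_norm (μ := μ) (fun v => f v - g v)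
    _ ≤ ∫ _, ε ∂μ := integral_mono (hf.sub hg).abs (integrable_const ε) h
    _ = ε * (μ univ).toReal := by simp [mul_comm, Measure.real]

lemma dBL_eq_iSup (μ κ : Measure X) [IsFiniteMeasure μ] [IsFiniteMeasure κ] :
    dBL μ κ = ⨆ n : ℕ, |(∫ v, (seqK n).1 v ∂μ) - ∫ v, (seqK n).1 v ∂κ| := by
  set S := ⨆ n : ℕ, |(∫ v, (seqK n).1 v ∂μ) - ∫ v, (seqK n).1 v ∂κ| with hS
  refine le_antisymm ?_ (ciSup_le fun n => le_dBL ⟨(seqK n).1, (seqK n).2⟩)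
  refine dBL_le fun f => ?_
  set M : ℝ := (μ univ).toReal + (κ univ).toReal with hM
  have hM0 : 0 ≤ M := by positivity
  refine le_of_forall_pos_le_add fun ε hε => ?_
  set ε' : ℝ := ε / (M + 1) with hε'
  have hε'0 : 0 < ε' := by positivity
  set fC : KC := ⟨⟨f.1, f.2.1.continuous⟩, f.2⟩ with hfC
  obtain ⟨n, hn⟩ := denseRange_seqK.exists_dist_lt fC hε'0
  have hpt : ∀ v, |f.1 v - (seqK n).1 v| ≤ ε' := by
    intro v
    have h1 : dist (fC.1 v) ((seqK n).1 v) ≤ dist fC.1 (seqK n).1 :=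
      ContinuousMap.dist_apply_le_dist v
    have h2 : dist fC.1 (seqK n).1 = dist fC (seqK n) := (Subtype.dist_eq fC (seqK n)).symm
    have := h1.trans (h2.le.trans hn.le)
    rw [Real.dist_eq] at this; exact this
  have hcf := f.2.1.continuous
  have hcg := (seqK n).1.continuous
  have e1 : |(∫ v, f.1 v ∂μ) - ∫ v, (seqK n).1 v ∂μ| ≤ ε' * (μ univ).toReal :=
    integral_err (integrable_K hcf f.2.2) (integrable_K hcg (seqK n).2.2) hε'0.le hpt
  have e2 : |(∫ v, f.1 v ∂κ) - ∫ v, (seqK n).1 v ∂κ| ≤ ε' * (κ univ).toReal :=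
    integral_err (integrable_K hcf f.2.2) (integrable_K hcg (seqK n).2.2) hε'0.le hpt
  have hterm : |(∫ v, (seqK n).1 v ∂μ) - ∫ v, (seqK n).1 v ∂κ| ≤ S :=
    le_ciSup (bddAbove_seqK_terms' μ κ) n
  have herr : ε' * (μ univ).toReal + ε' * (κ univ).toReal ≤ ε := by
    have : ε' * (μ univ).toReal + ε' * (κ univ).toReal = ε' * M := by ring
    rw [this, hε']
    rw [div_mul_eq_mul_div, div_le_iff₀ (by positivity)]
    nlinarith
  calc |(∫ v, f.1 v ∂μ) - ∫ v, f.1 v ∂κ|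
      ≤ |(∫ v, (seqK n).1 v ∂μ) - ∫ v, (seqK n).1 v ∂κ|
        + (|(∫ v, f.1 v ∂μ) - ∫ v, (seqK n).1 v ∂μ|
          + |(∫ v, f.1 v ∂κ) - ∫ v, (seqK n).1 v ∂κ|) := by
        rw [abs_sub_comm (∫ v, f.1 v ∂κ) _]
        have := abs_sub_le (∫ v, f.1 v ∂μ) (∫ v, (seqK n).1 v ∂μ) (∫ v, f.1 v ∂κ)
        have h2 := abs_sub_le (∫ v, (seqK n).1 v ∂μ) (∫ v, (seqK n).1 v ∂κ) (∫ v, f.1 v ∂κ)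
        linarith
    _ ≤ S + ε := by have := add_le_add e1 e2; linarith

lemma bddAbove_seqK_terms (μ κ : Measure X) [IsFiniteMeasure μ] [IsFiniteMeasure κ] :
    BddAbove (Set.range fun n : ℕ => |(∫ v, (seqK n).1 v ∂μ) - ∫ v, (seqK n).1 v ∂κ|) := by
  refine ⟨(μ univ).toReal + (κ univ).toReal, ?_⟩
  rintro - ⟨n, rfl⟩
  exact dBL_term_le ⟨(seqK n).1, (seqK n).2⟩

/-! ### measurability -/

section Meas
variable {Ω : Type*} [MeasurableSpace Ω]

lemma finite_of_memMb {b : ℝ} {μf : Ω → Measure X} (h : MemMb b μf) (y : Ω) :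
    IsFiniteMeasure (μf y) := ⟨lt_of_le_of_lt (h.2 y) ENNReal.ofReal_lt_top⟩

lemma measurable_measure_family {b : ℝ} {μf : Ω → Measure X} (h : MemMb b μf) :
    Measurable μf := by
  apply Measure.measurable_of_measurable_coe
  intro S hS
  have hne : ∀ x, μf x S ≠ ∞ := fun x =>
    ((measure_mono (subset_univ S)).trans_lt
      (lt_of_le_of_lt (h.2 x) ENNReal.ofReal_lt_top)).ne
  have heq : (fun x => μf x S) = fun x => ENNReal.ofReal ((μf x S).toReal) := by
    funext x; rw [ENNReal.ofReal_toReal (hne x)]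
  rw [heq]
  exact ENNReal.measurable_ofReal.comp (h.1 S hS)

lemma measurable_integral_family {b : ℝ} {μf : Ω → Measure X} (h : MemMb b μf)
    {f : X → ℝ} (hfm : Measurable f) (hf0 : ∀ v, 0 ≤ f v) :
    Measurable fun x => ∫ v, f v ∂(μf x) := by
  have heq : (fun x => ∫ v, f v ∂(μf x))
      = fun x => (∫⁻ v, ENNReal.ofReal (f v) ∂(μf x)).toReal := by
    funext x
    rw [integral_eq_lintegral_of_nonneg_ae (.of_forall hf0) hfm.aestronglyMeasurable]
  rw [heq]
  exact ENNReal.measurable_toReal.comp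
    ((Measure.measurable_lintegral hfm.ennreal_ofReal).comp (measurable_measure_family h))

lemma measurable_dBL_family {b : ℝ} {μf κf : Ω → Measure X} (hμ : MemMb b μf)
    (hκ : MemMb b κf) : Measurable fun y => dBL (μf y) (κf y) := by
  have heq : (fun y => dBL (μf y) (κf y))
      = fun y => ⨆ n : ℕ, |(∫ v, (seqK n).1 v ∂(μf y)) - ∫ v, (seqK n).1 v ∂(κf y)| := by
    funext y
    haveI := finite_of_memMb hμ y; haveI := finite_of_memMb hκ y
    exact dBL_eq_iSup _ _
  rw [heq]
  refine Measurable.iSup fun n => ?_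
  have hm := (seqK n).1.continuous.measurable
  exact ((measurable_integral_family hμ hm fun v => ((seqK n).2.2 v).1).sub
    (measurable_integral_family hκ hm fun v => ((seqK n).2.2 v).1)).abs

/-! ### dbarb lemmas -/

lemma integral_le_const {m : Measure Ω} (hm : m univ ≤ 1) {g : Ω → ℝ} {c : ℝ} (hc : 0 ≤ c)
    (h1 : ∀ y, g y ≤ c) : ∫ y, g y ∂m ≤ c := by
  by_cases hint : Integrable g m
  · haveI : IsFiniteMeasure m := ⟨lt_of_le_of_lt hm ENNReal.one_lt_top⟩
    calc ∫ y, g y ∂m ≤ ∫ _, c ∂m := integral_mono hint (integrable_const c) h1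
      _ = (m univ).toReal * c := by simp [mul_comm, Measure.real]
      _ ≤ 1 * c := by
          refine mul_le_mul_of_nonneg_right ?_ hc
          simpa using ENNReal.toReal_mono (by simp) hm
      _ = c := one_mul c
  · rw [integral_undef hint]; exact hc

lemma zero_mem_GF [Nonempty Ω] : (fun _ : Ω => (0 : Measure Ω)) ∈ GraphopFibers Ω := by
  refine ⟨fun x => by simp, Measure.dirac (Classical.arbitrary Ω), inferInstance, ?_⟩
  intro S S' hS hS'; simp

instance [Nonempty Ω] : Nonempty (GraphopFibers Ω) := ⟨⟨_, zero_mem_GF⟩⟩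

lemma dirac_mem_GF [Nonempty Ω] : (fun x : Ω => Measure.dirac x) ∈ GraphopFibers Ω := by
  refine ⟨fun x => by simp, Measure.dirac (Classical.arbitrary Ω), inferInstance, ?_⟩
  intro S S' hS hS'
  have h1 : ∀ (A B : Set Ω), MeasurableSet A → MeasurableSet B →
      (∫⁻ x in A, (Measure.dirac x) B ∂(Measure.dirac (Classical.arbitrary Ω)))
        = (Measure.dirac (Classical.arbitrary Ω)) (B ∩ A) := by
    intro A B hA hB
    have hpt : ∀ x, (Measure.dirac x) B = B.indicator (fun _ => (1:ℝ≥0∞)) x := fun x =>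
      Measure.dirac_apply' x hB
    simp_rw [hpt]
    rw [lintegral_indicator hB, setLIntegral_one, Measure.restrict_apply hB]
  rw [h1 S S' hS hS', h1 S' S hS' hS, inter_comm]

section Dbarb
variable [Nonempty Ω] {b : ℝ} (hb : 0 < b) {μf κf : Ω → Measure X}
  (hμ : MemMb b μf) (hκ : MemMb b κf)

include hb hμ hκ

lemma dBL_family_le_2b : ∀ y, dBL (μf y) (κf y) ≤ 2 * b := by
  intro y
  haveI := finite_of_memMb hμ y; haveI := finite_of_memMb hκ y
  refine (dBL_le_masses _ _).trans ?_
  have h1 : (μf y univ).toReal ≤ b := by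
    refine (ENNReal.toReal_mono ENNReal.ofReal_ne_top (hμ.2 y)).trans ?_
    rw [ENNReal.toReal_ofReal hb.le]
  have h2 : (κf y univ).toReal ≤ b := by
    refine (ENNReal.toReal_mono ENNReal.ofReal_ne_top (hκ.2 y)).trans ?_
    rw [ENNReal.toReal_ofReal hb.le]
  linarith

lemma inner_le_2b (η : GraphopFibers Ω) (x : Ω) :
    ∫ y, dBL (μf y) (κf y) ∂(η.1 x) ≤ 2 * b :=
  integral_le_const (η.2.1 x) (by linarith) (dBL_family_le_2b hb hμ hκ)

lemma bddAbove_outer :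
    BddAbove (Set.range fun η : GraphopFibers Ω =>
      ⨆ x : Ω, ∫ y, dBL (μf y) (κf y) ∂(η.1 x)) := by
  refine ⟨2 * b, ?_⟩
  rintro - ⟨η, rfl⟩
  exact ciSup_le fun x => inner_le_2b hb hμ hκ η x

lemma bddAbove_inner (η : GraphopFibers Ω) :
    BddAbove (Set.range fun x : Ω => ∫ y, dBL (μf y) (κf y) ∂(η.1 x)) := by
  refine ⟨2 * b, ?_⟩
  rintro - ⟨x, rfl⟩
  exact inner_le_2b hb hμ hκ η x

lemma dbarb_nonneg : 0 ≤ dbarb μf κf := by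
  have h0 : (⨆ x : Ω, ∫ y, dBL (μf y) (κf y)
      ∂((⟨_, zero_mem_GF⟩ : GraphopFibers Ω).1 x)) = 0 := by
    simp
  have := le_ciSup (bddAbove_outer hb hμ hκ) (⟨_, zero_mem_GF⟩ : GraphopFibers Ω)
  rw [h0] at this
  exact this

lemma pointwise_le_dbarb (x : Ω) : dBL (μf x) (κf x) ≤ dbarb μf κf := by
  have hsm : StronglyMeasurable fun y => dBL (μf y) (κf y) :=
    (measurable_dBL_family hμ hκ).stronglyMeasurable
  have h1 : dBL (μf x) (κf x)
      = ∫ y, dBL (μf y) (κf y) ∂(Measure.dirac x) :=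
    (integral_dirac' _ x hsm).symm
  rw [h1]
  set η : GraphopFibers Ω := ⟨_, dirac_mem_GF⟩ with hη
  have h2 : (∫ y, dBL (μf y) (κf y) ∂(Measure.dirac x))
      ≤ ⨆ x : Ω, ∫ y, dBL (μf y) (κf y) ∂(η.1 x) :=
    le_ciSup (bddAbove_inner hb hμ hκ η) x
  exact h2.trans (le_ciSup (bddAbove_outer hb hμ hκ) η)

lemma dbarb_le_of_pointwise {c : ℝ} (hc : 0 ≤ c)
    (h : ∀ y, dBL (μf y) (κf y) ≤ c) : dbarb μf κf ≤ c := by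
  refine ciSup_le fun η => ciSup_le fun x => ?_
  exact integral_le_const (η.2.1 x) hc h

end Dbarb
end Meas

/-! ### construction of the limit measure -/

section Limit

variable (ρ : ℕ → Measure X) {b : ℝ}

/-- Limit functional. -/
noncomputable def Lf (f : X → ℝ) : ℝ := limUnder atTop fun n => ∫ v, f v ∂(ρ n)

variable (hb : 0 < b) (hfin : ∀ n, IsFiniteMeasure (ρ n))
  (hmass : ∀ n, ρ n univ ≤ ENNReal.ofReal b)
  (hC : ∀ ε > (0:ℝ), ∃ N, ∀ i ≥ N, ∀ j ≥ N, dBL (ρ i) (ρ j) ≤ ε)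

lemma lipschitz_integrable (μ : Measure X) [IsFiniteMeasure μ] {c : ℝ≥0} {M : ℝ}
    {f : X → ℝ} (hf : LipschitzWith c f) (h0 : ∀ v, f v ∈ Icc 0 M) :
    Integrable f μ :=
  integrable_of_bounded hf.continuous (M := M) fun v =>
    abs_le.2 ⟨by linarith [(h0 v).1, (h0 v).2], (h0 v).2⟩

include hfin hC in
lemma Ltend {c : ℝ≥0} {M : ℝ} {f : X → ℝ} (hf : LipschitzWith c f)
    (h0 : ∀ v, f v ∈ Icc 0 M) :
    Tendsto (fun n => ∫ v, f v ∂(ρ n)) atTop (𝓝 (Lf ρ f)) := by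
  have hcs : CauchySeq fun n => ∫ v, f v ∂(ρ n) := by
    set C : ℝ := max (max (c:ℝ) M) 1 with hCdef
    have hC1 : (1:ℝ) ≤ C := le_max_right _ _
    have hCpos : (0:ℝ) < C := lt_of_lt_of_le one_pos hC1
    have hcC : (c:ℝ) ≤ C := le_trans (le_max_left _ _) (le_max_left _ _)
    have hMC : M ≤ C := le_trans (le_max_right _ _) (le_max_left _ _)
    set g : X → ℝ := fun v => C⁻¹ * f v with hgdef
    have hgl : LipschitzWith 1 g := by
      refine LipschitzWith.of_dist_le_mul fun v w => ?_
      have h1 : dist (f v) (f w) ≤ (c:ℝ) * dist v w := hf.dist_le_mul v w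
      have h2 : dist (g v) (g w) = C⁻¹ * dist (f v) (f w) := by
        simp only [hgdef, Real.dist_eq, ← mul_sub, abs_mul,
          abs_of_nonneg (by positivity : (0:ℝ) ≤ C⁻¹)]
      rw [h2]
      have h3 : C⁻¹ * (c:ℝ) ≤ 1 := by
        rw [inv_mul_le_iff₀ hCpos, mul_one]; exact hcC
      calc C⁻¹ * dist (f v) (f w) ≤ C⁻¹ * ((c:ℝ) * dist v w) :=
            mul_le_mul_of_nonneg_left h1 (by positivity)
        _ = (C⁻¹ * (c:ℝ)) * dist v w := by ring
        _ ≤ 1 * dist v w := mul_le_mul_of_nonneg_right h3 dist_nonneg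
        _ = ((1:ℝ≥0):ℝ) * dist v w := by norm_num
    have hg01 : ∀ v, g v ∈ Icc (0:ℝ) 1 := by
      intro v
      refine ⟨by have := (h0 v).1; positivity, ?_⟩
      rw [hgdef]
      calc C⁻¹ * f v ≤ C⁻¹ * C :=
            mul_le_mul_of_nonneg_left ((h0 v).2.trans hMC) (by positivity)
        _ = 1 := inv_mul_cancel₀ hCpos.ne'
    have hfg : ∀ n, ∫ v, f v ∂(ρ n) = C * ∫ v, g v ∂(ρ n) := by
      intro n
      rw [hgdef]
      rw [MeasureTheory.integral_const_mul]
      rw [← mul_assoc, mul_inv_cancel₀ hCpos.ne', one_mul]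
    refine Metric.cauchySeq_iff.2 fun ε hε => ?_
    obtain ⟨N, hN⟩ := hC (ε / (2 * C)) (by positivity)
    refine ⟨N, fun i hi j hj => ?_⟩
    haveI := hfin i; haveI := hfin j
    have hle : |(∫ v, g v ∂(ρ i)) - ∫ v, g v ∂(ρ j)| ≤ dBL (ρ i) (ρ j) :=
      le_dBL ⟨g, hgl, hg01⟩
    have heq : dist (∫ v, f v ∂(ρ i)) (∫ v, f v ∂(ρ j))
        = C * |(∫ v, g v ∂(ρ i)) - ∫ v, g v ∂(ρ j)| := by
      rw [Real.dist_eq, hfg i, hfg j, ← mul_sub, abs_mul, abs_of_pos hCpos]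
    rw [heq]
    calc C * |(∫ v, g v ∂(ρ i)) - ∫ v, g v ∂(ρ j)| ≤ C * (ε / (2 * C)) :=
          mul_le_mul_of_nonneg_left (hle.trans (hN i hi j hj)) hCpos.le
      _ = ε / 2 := by field_simp
      _ < ε := by linarith
  exact hcs.tendsto_limUnder

include hfin hC in
lemma L_nonneg {c : ℝ≥0} {M : ℝ} {f : X → ℝ} (hf : LipschitzWith c f)
    (h0 : ∀ v, f v ∈ Icc 0 M) : 0 ≤ Lf ρ f := by
  refine ge_of_tendsto (Ltend ρ hfin hC hf h0) (Eventually.of_forall fun n => ?_)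
  exact integral_nonneg fun v => (h0 v).1

include hfin hC in
lemma L_mono {c₁ c₂ : ℝ≥0} {M₁ M₂ : ℝ} {f g : X → ℝ}
    (hf : LipschitzWith c₁ f) (h0f : ∀ v, f v ∈ Icc 0 M₁)
    (hg : LipschitzWith c₂ g) (h0g : ∀ v, g v ∈ Icc 0 M₂)
    (hfg : ∀ v, f v ≤ g v) : Lf ρ f ≤ Lf ρ g := by
  refine le_of_tendsto_of_tendsto (Ltend ρ hfin hC hf h0f) (Ltend ρ hfin hC hg h0g)
    (Eventually.of_forall fun n => ?_)
  haveI := hfin n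
  exact integral_mono (lipschitz_integrable _ hf h0f) (lipschitz_integrable _ hg h0g) hfg

include hb hfin hmass hC in
lemma L_le_b {c : ℝ≥0} {f : X → ℝ} (hf : LipschitzWith c f)
    (h0 : ∀ v, f v ∈ Icc 0 1) : Lf ρ f ≤ b := by
  refine le_of_tendsto (Ltend ρ hfin hC hf h0) (Eventually.of_forall fun n => ?_)
  haveI := hfin n
  refine (integral_K_le hf.continuous h0).trans ?_
  refine (ENNReal.toReal_mono ENNReal.ofReal_ne_top (hmass n)).trans ?_
  rw [ENNReal.toReal_ofReal hb.le]

include hfin hC in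
lemma L_add {c₁ c₂ : ℝ≥0} {M₁ M₂ : ℝ} {f g : X → ℝ}
    (hf : LipschitzWith c₁ f) (h0f : ∀ v, f v ∈ Icc 0 M₁)
    (hg : LipschitzWith c₂ g) (h0g : ∀ v, g v ∈ Icc 0 M₂) :
    Lf ρ (fun v => f v + g v) = Lf ρ f + Lf ρ g := by
  have hsum : LipschitzWith (c₁ + c₂) fun v => f v + g v := by
    simpa using hf.add hg
  have hsum0 : ∀ v, f v + g v ∈ Icc (0:ℝ) (M₁ + M₂) := fun v =>
    ⟨add_nonneg (h0f v).1 (h0g v).1, add_le_add (h0f v).2 (h0g v).2⟩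
  have h1 := Ltend ρ hfin hC hsum hsum0
  have h2 := (Ltend ρ hfin hC hf h0f).add (Ltend ρ hfin hC hg h0g)
  have h3 : (fun n => ∫ v, (f v + g v) ∂(ρ n))
      = fun n => (∫ v, f v ∂(ρ n)) + ∫ v, g v ∂(ρ n) := by
    funext n
    haveI := hfin n
    exact integral_add (lipschitz_integrable _ hf h0f) (lipschitz_integrable _ hg h0g)
  rw [h3] at h1
  exact tendsto_nhds_unique h1 h2

include hfin hC in
lemma L_const_mul {c : ℝ≥0} {M r : ℝ} {f : X → ℝ} (hr : 0 ≤ r)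
    (hf : LipschitzWith c f) (h0 : ∀ v, f v ∈ Icc 0 M) :
    Lf ρ (fun v => r * f v) = r * Lf ρ f := by
  have hrl : LipschitzWith (⟨r, hr⟩ * c) fun v => r * f v := by
    refine LipschitzWith.of_dist_le_mul fun v w => ?_
    have h1 : dist (f v) (f w) ≤ (c:ℝ) * dist v w := hf.dist_le_mul v w
    have h2 : dist (r * f v) (r * f w) = r * dist (f v) (f w) := by
      simp only [Real.dist_eq, ← mul_sub, abs_mul, abs_of_nonneg hr]
    rw [h2]
    change r * dist (f v) (f w) ≤ (r * (c:ℝ)) * dist v w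
    push_cast
    nlinarith [dist_nonneg (x := v) (y := w), mul_le_mul_of_nonneg_left h1 hr]
  have h0' : ∀ v, r * f v ∈ Icc (0:ℝ) (r * M) := fun v =>
    ⟨mul_nonneg hr (h0 v).1, mul_le_mul_of_nonneg_left (h0 v).2 hr⟩
  have h1 := Ltend ρ hfin hC hrl h0'
  have h2 := (Ltend ρ hfin hC hf h0).const_mul r
  have h3 : (fun n => ∫ v, r * f v ∂(ρ n)) = fun n => r * ∫ v, f v ∂(ρ n) := by
    funext n; exact MeasureTheory.integral_const_mul r f
  rw [h3] at h1
  exact tendsto_nhds_unique h1 h2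

/-! ### the functions psi and the set function ell -/

open Classical in
noncomputable def psi (K : Set X) (n : ℕ) (v : X) : ℝ :=
  if K = ∅ then 0 else clip01 (2 - ((n:ℝ)+1) * Metric.infDist v K)

open Classical in
lemma psi_def (K : Set X) (n : ℕ) (v : X) :
    psi K n v = if K = ∅ then 0 else clip01 (2 - ((n:ℝ)+1) * Metric.infDist v K) := rfl

lemma psi_of_ne {K : Set X} (hK : K ≠ ∅) (n : ℕ) (v : X) :
    psi K n v = clip01 (2 - ((n:ℝ)+1) * Metric.infDist v K) := by
  rw [psi_def]; exact if_neg hK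

lemma psi_of_empty (n : ℕ) (v : X) : psi (∅ : Set X) n v = 0 := by
  rw [psi_def]; exact if_pos rfl

lemma psi_mem (K : Set X) (n : ℕ) (v : X) : psi K n v ∈ Icc (0:ℝ) 1 := by
  by_cases hK : K = ∅
  · subst hK; rw [psi_of_empty]; exact ⟨le_refl 0, zero_le_one⟩
  · rw [psi_of_ne hK]; exact clip01_mem _

lemma psi_lipschitz (K : Set X) (n : ℕ) : LipschitzWith (n+1) (psi K n) := by
  by_cases hK : K = ∅
  · subst hK
    have : psi (∅ : Set X) n = fun _ => (0:ℝ) := by funext v; exact psi_of_empty n v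
    rw [this]
    exact LipschitzWith.const' 0
  · have heq : psi K n = fun v => clip01 (2 - ((n:ℝ)+1) * Metric.infDist v K) := by
      funext v; exact psi_of_ne hK n v
    rw [heq]
    refine LipschitzWith.clip01_comp ?_
    refine LipschitzWith.of_dist_le_mul fun v w => ?_
    have h1 : dist (Metric.infDist v K) (Metric.infDist w K) ≤ dist v w := by
      simpa using (Metric.lipschitz_infDist_pt K).dist_le_mul v w
    have h2 : dist (2 - ((n:ℝ)+1) * Metric.infDist v K) (2 - ((n:ℝ)+1) * Metric.infDist w K)
        = ((n:ℝ)+1) * dist (Metric.infDist v K) (Metric.infDist w K) := by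
      simp only [Real.dist_eq]
      rw [show (2 - ((n:ℝ)+1) * Metric.infDist v K) - (2 - ((n:ℝ)+1) * Metric.infDist w K)
        = ((n:ℝ)+1) * (Metric.infDist w K - Metric.infDist v K) by ring]
      rw [abs_mul, abs_of_nonneg (by positivity : (0:ℝ) ≤ (n:ℝ)+1), abs_sub_comm,
        ← Real.dist_eq]
    rw [h2]
    have h3 : ((n+1 : ℝ≥0) : ℝ) = (n:ℝ)+1 := by push_cast; ring
    rw [h3]
    exact mul_le_mul_of_nonneg_left h1 (by positivity)

lemma psi_antitone (K : Set X) (v : X) : Antitone fun n => psi K n v := by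
  refine antitone_nat_of_succ_le fun n => ?_
  by_cases hK : K = ∅
  · subst hK; simp only [psi_of_empty]; exact le_refl 0
  · simp only [psi_of_ne hK]
    refine clip01_mono ?_
    have h1 : (0:ℝ) ≤ Metric.infDist v K := Metric.infDist_nonneg
    have h2 : ((n:ℝ)+1) * Metric.infDist v K ≤ ((n:ℝ)+1+1) * Metric.infDist v K :=
      mul_le_mul_of_nonneg_right (by linarith) h1
    push_cast
    linarith

lemma psi_subset {K₁ K₂ : Set X} (h : K₁ ⊆ K₂) (n : ℕ) (v : X) :
    psi K₁ n v ≤ psi K₂ n v := by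
  by_cases h1 : K₁ = ∅
  · subst h1; rw [psi_of_empty]; exact (psi_mem K₂ n v).1
  · have h2 : K₂ ≠ ∅ := fun hh => h1 (eq_empty_of_subset_empty (hh ▸ h))
    rw [psi_of_ne h1, psi_of_ne h2]
    refine clip01_mono ?_
    have := Metric.infDist_le_infDist_of_subset h (nonempty_iff_ne_empty.2 h1) (x := v)
    nlinarith [Metric.infDist_nonneg (x := v) (s := K₁)]

lemma psi_one_of_near {K : Set X} (hK : K ≠ ∅) {n : ℕ} {v : X}
    (h : ((n:ℝ)+1) * Metric.infDist v K ≤ 1) : psi K n v = 1 := by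
  rw [psi_of_ne hK]
  exact clip01_of_one_le (by linarith)

lemma psi_one_of_mem {K : Set X} {n : ℕ} {v : X} (hv : v ∈ K) : psi K n v = 1 := by
  refine psi_one_of_near (nonempty_iff_ne_empty.1 ⟨v, hv⟩) ?_
  rw [Metric.infDist_zero_of_mem hv]
  simp

lemma psi_zero_of_far {K : Set X} {n : ℕ} {v : X}
    (h : 2 ≤ ((n:ℝ)+1) * Metric.infDist v K) : psi K n v = 0 := by
  by_cases hK : K = ∅
  · subst hK; exact psi_of_empty n v
  · rw [psi_of_ne hK]
    exact clip01_of_nonpos (by linarith)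

lemma psi_union (K₁ K₂ : Set X) (n : ℕ) (v : X) :
    psi (K₁ ∪ K₂) n v = max (psi K₁ n v) (psi K₂ n v) := by
  by_cases h1 : K₁ = ∅
  · subst h1
    simp only [psi_of_empty, empty_union]
    rw [max_eq_right (psi_mem K₂ n v).1]
  by_cases h2 : K₂ = ∅
  · subst h2
    simp only [psi_of_empty, union_empty]
    rw [max_eq_left (psi_mem K₁ n v).1]
  have hu : K₁ ∪ K₂ ≠ ∅ := fun hh => h1 (eq_empty_of_subset_empty (hh ▸ subset_union_left))
  rw [psi_of_ne hu, psi_of_ne h1, psi_of_ne h2]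
  have hmin : Metric.infDist v (K₁ ∪ K₂) = min (Metric.infDist v K₁) (Metric.infDist v K₂) := by
    unfold Metric.infDist
    rw [EMetric.infEdist_union]
    exact ENNReal.toReal_min (Metric.infEdist_ne_top (nonempty_iff_ne_empty.2 h1))
      (Metric.infEdist_ne_top (nonempty_iff_ne_empty.2 h2))
  rw [hmin]
  have hanti : Antitone fun d : ℝ => clip01 (2 - ((n:ℝ)+1) * d) := by
    intro a c hac
    refine clip01_mono ?_
    have : (0:ℝ) ≤ (n:ℝ)+1 := by positivity
    nlinarith
  exact hanti.map_min

/-- The set function `ell`. -/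
noncomputable def ell (K : Set X) : ℝ := ⨅ n : ℕ, Lf ρ (psi K n)

include hfin hC in
lemma bddBelow_Lpsi (K : Set X) : BddBelow (Set.range fun n => Lf ρ (psi K n)) := by
  refine ⟨0, ?_⟩
  rintro - ⟨n, rfl⟩
  exact L_nonneg ρ hfin hC (psi_lipschitz K n) (psi_mem K n)

include hfin hC in
lemma ell_le_Lpsi (K : Set X) (n : ℕ) : ell ρ K ≤ Lf ρ (psi K n) :=
  ciInf_le (bddBelow_Lpsi ρ hfin hC K) n

include hfin hC in
lemma ell_nonneg (K : Set X) : 0 ≤ ell ρ K :=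
  le_ciInf fun n => L_nonneg ρ hfin hC (psi_lipschitz K n) (psi_mem K n)

include hfin hC in
lemma ell_tendsto (K : Set X) :
    Tendsto (fun n => Lf ρ (psi K n)) atTop (𝓝 (ell ρ K)) := by
  refine tendsto_atTop_ciInf ?_ (bddBelow_Lpsi ρ hfin hC K)
  intro m n hmn
  exact L_mono ρ hfin hC (psi_lipschitz K n) (psi_mem K n) (psi_lipschitz K m) (psi_mem K m)
    (fun v => psi_antitone K v hmn)

include hb hfin hmass hC in
lemma ell_le_b (K : Set X) : ell ρ K ≤ b :=
  (ell_le_Lpsi ρ hfin hC K 0).trans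
    (L_le_b ρ hb hfin hmass hC (psi_lipschitz K 0) (psi_mem K 0))

include hfin hC in
lemma ell_mono {K₁ K₂ : Set X} (h : K₁ ⊆ K₂) : ell ρ K₁ ≤ ell ρ K₂ := by
  refine le_ciInf fun n => ?_
  refine (ell_le_Lpsi ρ hfin hC K₁ n).trans ?_
  exact L_mono ρ hfin hC (psi_lipschitz K₁ n) (psi_mem K₁ n) (psi_lipschitz K₂ n)
    (psi_mem K₂ n) (psi_subset h n)

include hfin hC in
lemma ell_empty : ell ρ (∅ : Set X) = 0 := by
  have h0 : ∀ n : ℕ, psi (∅ : Set X) n = fun _ => (0:ℝ) := by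
    intro n; funext v; exact psi_of_empty n v
  have h1 : ∀ n : ℕ, Lf ρ (psi (∅ : Set X) n) = 0 := by
    intro n
    have ht := Ltend ρ hfin hC (c := 0) (M := 0) (f := psi (∅ : Set X) n)
      (by rw [h0 n]; exact LipschitzWith.const' 0)
      (by rw [h0 n]; exact fun v => ⟨le_refl 0, le_refl 0⟩)
    have h2 : (fun n' => ∫ v, psi (∅ : Set X) n v ∂(ρ n')) = fun _ => (0:ℝ) := by
      funext n'; rw [h0 n]; simp
    rw [h2] at ht
    exact tendsto_nhds_unique ht tendsto_const_nhds
  unfold ell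
  simp_rw [h1]
  exact ciInf_const

include hfin hC in
lemma lemA {K : Set X} (hK : IsCompact K) {c : ℝ≥0} {M : ℝ} {g : X → ℝ}
    (hg : LipschitzWith c g) (h0 : ∀ v, g v ∈ Icc 0 M) (h1 : ∀ v ∈ K, 1 ≤ g v) :
    ell ρ K ≤ Lf ρ g := by
  by_cases hKe : K = ∅
  · rw [hKe, ell_empty ρ hfin hC]
    exact L_nonneg ρ hfin hC hg h0
  have hKne : K.Nonempty := nonempty_iff_ne_empty.2 hKe
  have key : ∀ n : ℕ, 2 * (c:ℝ) < (n:ℝ) + 1 →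
      ell ρ K ≤ (1 - 2 * (c:ℝ) / ((n:ℝ)+1))⁻¹ * Lf ρ g := by
    intro n hn
    set a : ℝ := (1 - 2 * (c:ℝ) / ((n:ℝ)+1))⁻¹ with ha
    have hdpos : (0:ℝ) < 1 - 2 * (c:ℝ) / ((n:ℝ)+1) := by
      rw [sub_pos, div_lt_one (by positivity)]
      exact hn
    have hapos : 0 < a := by positivity
    have hpt : ∀ v, psi K n v ≤ a * g v := by
      intro v
      by_cases hfar : 2 ≤ ((n:ℝ)+1) * Metric.infDist v K
      · rw [psi_zero_of_far hfar]
        exact mul_nonneg hapos.le (h0 v).1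
      · push_neg at hfar
        obtain ⟨y, hy, hyd⟩ := hK.exists_infDist_eq_dist hKne v
        have hgv : 1 - 2 * (c:ℝ) / ((n:ℝ)+1) ≤ g v := by
          have h2 : |g v - g y| ≤ (c:ℝ) * dist v y := by
            simpa [Real.dist_eq] using hg.dist_le_mul v y
          have h3 : (c:ℝ) * dist v y ≤ (c:ℝ) * (2 / ((n:ℝ)+1)) := by
            refine mul_le_mul_of_nonneg_left ?_ c.coe_nonneg
            rw [← hyd]
            rw [show ((2:ℝ) / ((n:ℝ)+1)) = 2 / ((n:ℝ)+1) from rfl]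
            rw [le_div_iff₀ (by positivity : (0:ℝ) < (n:ℝ)+1)]
            nlinarith [Metric.infDist_nonneg (x := v) (s := K)]
          have h4 := h1 y hy
          have h5 : g y - g v ≤ (c:ℝ) * (2 / ((n:ℝ)+1)) := by
            calc g y - g v ≤ |g y - g v| := le_abs_self _
              _ = |g v - g y| := abs_sub_comm _ _
              _ ≤ (c:ℝ) * dist v y := h2
              _ ≤ _ := h3
          have h6 : (c:ℝ) * (2 / ((n:ℝ)+1)) = 2 * (c:ℝ) / ((n:ℝ)+1) := by ring
          rw [h6] at h5
          linarith
        calc psi K n v ≤ 1 := (psi_mem K n v).2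
          _ = a * (1 - 2 * (c:ℝ) / ((n:ℝ)+1)) := by
              rw [ha, inv_mul_cancel₀ hdpos.ne']
          _ ≤ a * g v := mul_le_mul_of_nonneg_left hgv hapos.le
    have hstep : Lf ρ (psi K n) ≤ a * Lf ρ g := by
      have hres := L_mono ρ hfin hC (psi_lipschitz K n) (psi_mem K n)
        (c₂ := ⟨a, hapos.le⟩ * c) (M₂ := a * M)
        (g := fun v => a * g v)
        (by
          refine LipschitzWith.of_dist_le_mul fun v w => ?_
          have hd : dist (g v) (g w) ≤ (c:ℝ) * dist v w := hg.dist_le_mul v w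
          have heq2 : dist (a * g v) (a * g w) = a * dist (g v) (g w) := by
            simp only [Real.dist_eq, ← mul_sub, abs_mul, abs_of_nonneg hapos.le]
          rw [heq2]
          change a * dist (g v) (g w) ≤ (a * (c:ℝ)) * dist v w
          push_cast
          nlinarith [dist_nonneg (x := v) (y := w), mul_le_mul_of_nonneg_left hd hapos.le])
        (fun v => ⟨mul_nonneg hapos.le (h0 v).1,
          mul_le_mul_of_nonneg_left (h0 v).2 hapos.le⟩)
        hpt
      rw [L_const_mul ρ hfin hC hapos.le hg h0] at hres
      exact hres
    exact (ell_le_Lpsi ρ hfin hC K n).trans hstep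
  have hlim : Tendsto (fun n : ℕ => (1 - 2 * (c:ℝ) / ((n:ℝ)+1))⁻¹ * Lf ρ g)
      atTop (𝓝 (Lf ρ g)) := by
    have h1' : Tendsto (fun n : ℕ => 2 * (c:ℝ) / ((n:ℝ)+1)) atTop (𝓝 0) := by
      refine Tendsto.div_atTop tendsto_const_nhds ?_
      exact tendsto_atTop_add_const_right atTop 1 tendsto_natCast_atTop_atTop
    have h2' : Tendsto (fun n : ℕ => (1 - 2 * (c:ℝ) / ((n:ℝ)+1))⁻¹) atTop (𝓝 1) := by
      have h3' : Tendsto (fun n : ℕ => 1 - 2 * (c:ℝ) / ((n:ℝ)+1)) atTop (𝓝 1) := by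
        simpa using tendsto_const_nhds.sub h1'
      have := h3'.inv₀ (by norm_num)
      simpa using this
    simpa using h2'.mul_const (Lf ρ g)
  refine ge_of_tendsto hlim ?_
  have hev : ∀ᶠ n : ℕ in atTop, 2 * (c:ℝ) < (n:ℝ) + 1 := by
    obtain ⟨N, hN⟩ := exists_nat_gt (2 * (c:ℝ))
    refine eventually_atTop.2 ⟨N, fun n hn => ?_⟩
    have : (N:ℝ) ≤ (n:ℝ) := Nat.cast_le.2 hn
    linarith
  exact hev.mono fun n hn => key n hn

include hfin hC in
lemma lemB {K : Set X} {c : ℝ≥0} {g : X → ℝ}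
    (hg : LipschitzWith c g) (h0 : ∀ v, g v ∈ Icc 0 1) (hoff : ∀ v ∉ K, g v ≤ 0) :
    Lf ρ g ≤ ell ρ K := by
  refine le_ciInf fun n => ?_
  refine L_mono ρ hfin hC hg h0 (psi_lipschitz K n) (psi_mem K n) fun v => ?_
  by_cases hv : v ∈ K
  · rw [psi_one_of_mem hv]; exact (h0 v).2
  · exact (hoff v hv).trans (psi_mem K n v).1

/-! ### the content and limit measure -/

include hfin hC in
lemma ell_sup_le (K₁ K₂ : Set X) :
    ell ρ (K₁ ∪ K₂) ≤ ell ρ K₁ + ell ρ K₂ := by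
  have key : ∀ n : ℕ, ell ρ (K₁ ∪ K₂) ≤ Lf ρ (psi K₁ n) + Lf ρ (psi K₂ n) := by
    intro n
    have hadd : LipschitzWith ((n+1) + (n+1)) fun v => psi K₁ n v + psi K₂ n v := by
      simpa using (psi_lipschitz K₁ n).add (psi_lipschitz K₂ n)
    have hadd0 : ∀ v, psi K₁ n v + psi K₂ n v ∈ Icc (0:ℝ) 2 := fun v =>
      ⟨add_nonneg (psi_mem K₁ n v).1 (psi_mem K₂ n v).1, by
        have := (psi_mem K₁ n v).2; have := (psi_mem K₂ n v).2; linarith⟩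
    have hle : Lf ρ (psi (K₁ ∪ K₂) n) ≤ Lf ρ fun v => psi K₁ n v + psi K₂ n v := by
      refine L_mono ρ hfin hC (psi_lipschitz _ n) (psi_mem _ n) hadd hadd0 fun v => ?_
      rw [psi_union]
      exact max_le (le_add_of_nonneg_right (psi_mem K₂ n v).1)
        (le_add_of_nonneg_left (psi_mem K₁ n v).1)
    rw [L_add ρ hfin hC (psi_lipschitz K₁ n) (psi_mem K₁ n)
      (psi_lipschitz K₂ n) (psi_mem K₂ n)] at hle
    exact (ell_le_Lpsi ρ hfin hC _ n).trans hle
  refine ge_of_tendsto ((ell_tendsto ρ hfin hC K₁).add (ell_tendsto ρ hfin hC K₂)) ?_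
  exact Eventually.of_forall key

include hfin hC in
lemma ell_sup_disjoint {K₁ K₂ : Set X} (hd : Disjoint K₁ K₂)
    (hc₁ : IsCompact K₁) (hc₂ : IsCompact K₂) :
    ell ρ (K₁ ∪ K₂) = ell ρ K₁ + ell ρ K₂ := by
  refine le_antisymm (ell_sup_le ρ hfin hC K₁ K₂) ?_
  by_cases h1 : K₁ = ∅
  · subst h1; rw [ell_empty ρ hfin hC]; simp
  by_cases h2 : K₂ = ∅
  · subst h2; rw [ell_empty ρ hfin hC]; simp
  obtain ⟨δ, hδ, hdisj⟩ := hd.exists_thickenings hc₁ hc₂.isClosed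
  have key : ∀ n : ℕ, 2 < δ * ((n:ℝ)+1) →
      Lf ρ (psi K₁ n) + Lf ρ (psi K₂ n) ≤ Lf ρ (psi (K₁ ∪ K₂) n) := by
    intro n hn
    have hpt : ∀ v, psi K₁ n v + psi K₂ n v ≤ psi (K₁ ∪ K₂) n v := by
      intro v
      rw [psi_union]
      by_cases hz : psi K₁ n v ≤ 0
      · have : psi K₁ n v = 0 := le_antisymm hz (psi_mem K₁ n v).1
        rw [this, zero_add]
        exact le_max_right _ _
      · push_neg at hz
        have hd1 : Metric.infDist v K₁ < δ := by
          by_contra hcon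
          push_neg at hcon
          have : 2 ≤ ((n:ℝ)+1) * Metric.infDist v K₁ := by
            calc (2:ℝ) ≤ δ * ((n:ℝ)+1) := hn.le
              _ ≤ Metric.infDist v K₁ * ((n:ℝ)+1) :=
                mul_le_mul_of_nonneg_right hcon (by positivity)
              _ = ((n:ℝ)+1) * Metric.infDist v K₁ := mul_comm _ _
          rw [psi_zero_of_far this] at hz
          exact lt_irrefl 0 hz
        have hvthick : v ∈ Metric.thickening δ K₁ := by
          rw [Metric.mem_thickening_iff]
          rw [Metric.infDist_lt_iff (nonempty_iff_ne_empty.2 h1)] at hd1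
          exact hd1
        have hnot : v ∉ Metric.thickening δ K₂ := fun hmem =>
          (hdisj.le_bot ⟨hvthick, hmem⟩ : False)
        have hd2 : δ ≤ Metric.infDist v K₂ := by
          by_contra hcon
          push_neg at hcon
          rw [Metric.infDist_lt_iff (nonempty_iff_ne_empty.2 h2)] at hcon
          exact hnot (Metric.mem_thickening_iff.2 hcon)
        have hz2 : psi K₂ n v = 0 := by
          refine psi_zero_of_far ?_
          calc (2:ℝ) ≤ δ * ((n:ℝ)+1) := hn.le
            _ ≤ Metric.infDist v K₂ * ((n:ℝ)+1) :=
              mul_le_mul_of_nonneg_right hd2 (by positivity)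
            _ = ((n:ℝ)+1) * Metric.infDist v K₂ := mul_comm _ _
        rw [hz2, add_zero]
        exact le_max_left _ _
    have hadd : LipschitzWith ((n+1) + (n+1)) fun v => psi K₁ n v + psi K₂ n v := by
      simpa using (psi_lipschitz K₁ n).add (psi_lipschitz K₂ n)
    have hadd0 : ∀ v, psi K₁ n v + psi K₂ n v ∈ Icc (0:ℝ) 2 := fun v =>
      ⟨add_nonneg (psi_mem K₁ n v).1 (psi_mem K₂ n v).1, by
        have := (psi_mem K₁ n v).2; have := (psi_mem K₂ n v).2; linarith⟩
    have := L_mono ρ hfin hC hadd hadd0 (psi_lipschitz _ n) (psi_mem _ n) hpt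
    rwa [L_add ρ hfin hC (psi_lipschitz K₁ n) (psi_mem K₁ n)
      (psi_lipschitz K₂ n) (psi_mem K₂ n)] at this
  have hev : ∀ᶠ n : ℕ in atTop,
      Lf ρ (psi K₁ n) + Lf ρ (psi K₂ n) ≤ Lf ρ (psi (K₁ ∪ K₂) n) := by
    obtain ⟨N, hN⟩ := exists_nat_gt (2 / δ)
    refine eventually_atTop.2 ⟨N, fun n hn => ?_⟩
    refine key n ?_
    have h3 : (N:ℝ) ≤ (n:ℝ) := Nat.cast_le.2 hn
    rw [div_lt_iff₀ hδ] at hN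
    calc (2:ℝ) < (N:ℝ) * δ := hN
      _ ≤ ((n:ℝ)+1) * δ := mul_le_mul_of_nonneg_right (by linarith) hδ.le
      _ = δ * ((n:ℝ)+1) := mul_comm _ _
  exact le_of_tendsto_of_tendsto
    ((ell_tendsto ρ hfin hC K₁).add (ell_tendsto ρ hfin hC K₂))
    (ell_tendsto ρ hfin hC (K₁ ∪ K₂)) hev

/-- The content built from `ell`. -/
noncomputable def contC : Content X where
  toFun K := Real.toNNReal (ell ρ K)
  mono' K₁ K₂ h := Real.toNNReal_le_toNNReal_iff'.2 (Or.inl (ell_mono ρ hfin hC h))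
  sup_disjoint' K₁ K₂ hd h₁ h₂ := by
    have : ((K₁ ⊔ K₂ : TopologicalSpace.Compacts X) : Set X) = ↑K₁ ∪ ↑K₂ := rfl
    simp only [this]
    rw [ell_sup_disjoint ρ hfin hC hd K₁.2 K₂.2,
      Real.toNNReal_add (ell_nonneg ρ hfin hC _) (ell_nonneg ρ hfin hC _)]
  sup_le' K₁ K₂ := by
    have : ((K₁ ⊔ K₂ : TopologicalSpace.Compacts X) : Set X) = ↑K₁ ∪ ↑K₂ := rfl
    simp only [this]
    refine le_trans (Real.toNNReal_le_toNNReal_iff'.2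
      (Or.inl (ell_sup_le ρ hfin hC ↑K₁ ↑K₂))) ?_
    exact Real.toNNReal_add_le

/-- The limit measure. -/
noncomputable def muLim : Measure X := (contC ρ hfin hC).measure

include hfin hC in
lemma muLim_compact {K : Set X} (hK : IsCompact K) :
    muLim ρ hfin hC K = ENNReal.ofReal (ell ρ K) := by
  have hmeas : MeasurableSet K := hK.isClosed.measurableSet
  refine le_antisymm ?_ ?_
  · have hstep : ∀ n : ℕ, muLim ρ hfin hC K ≤ ENNReal.ofReal (Lf ρ (psi K n)) := by
      intro n
      by_cases hKe : K = ∅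
      · subst hKe; simp
      have hδ : (0:ℝ) < 1/((n:ℝ)+1) := by positivity
      have h1 : muLim ρ hfin hC K
          ≤ (contC ρ hfin hC).outerMeasure (Metric.thickening (1/((n:ℝ)+1)) K) := by
        rw [muLim, Content.measure_apply _ hmeas]
        exact (contC ρ hfin hC).outerMeasure.mono (Metric.self_subset_thickening hδ K)
      rw [Content.outerMeasure_of_isOpen _ _ Metric.isOpen_thickening] at h1
      refine h1.trans ?_
      rw [Content.innerContent]
      refine iSup₂_le fun K' hK' => ?_
      have hone : ∀ v ∈ (K' : Set X), 1 ≤ psi K n v := by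
        intro v hv
        have hvm : v ∈ Metric.thickening (1/((n:ℝ)+1)) K := hK' hv
        rw [Metric.mem_thickening_iff] at hvm
        obtain ⟨z, hz, hdz⟩ := hvm
        have hdd : Metric.infDist v K ≤ 1/((n:ℝ)+1) :=
          (Metric.infDist_le_dist_of_mem hz).trans hdz.le
        rw [psi_one_of_near hKe ?_]
        calc ((n:ℝ)+1) * Metric.infDist v K ≤ ((n:ℝ)+1) * (1/((n:ℝ)+1)) :=
            mul_le_mul_of_nonneg_left hdd (by positivity)
          _ = 1 := by field_simp
      have hellle : ell ρ ↑K' ≤ Lf ρ (psi K n) :=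
        lemA ρ hfin hC K'.2 (psi_lipschitz K n) (psi_mem K n) hone
      calc ((contC ρ hfin hC).toFun K' : ℝ≥0∞)
          = ((ell ρ ↑K').toNNReal : ℝ≥0∞) := rfl
        _ ≤ ((Lf ρ (psi K n)).toNNReal : ℝ≥0∞) := by
            exact_mod_cast Real.toNNReal_le_toNNReal_iff'.2 (Or.inl hellle)
        _ = ENNReal.ofReal (Lf ρ (psi K n)) := rfl
    have hne : muLim ρ hfin hC K ≠ ∞ :=
      ((hstep 0).trans_lt ENNReal.ofReal_lt_top).ne
    have htr : ∀ n, (muLim ρ hfin hC K).toReal ≤ Lf ρ (psi K n) := by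
      intro n
      have := ENNReal.toReal_mono ENNReal.ofReal_ne_top (hstep n)
      rwa [ENNReal.toReal_ofReal
        (L_nonneg ρ hfin hC (psi_lipschitz K n) (psi_mem K n))] at this
    have hle2 : (muLim ρ hfin hC K).toReal ≤ ell ρ K := le_ciInf htr
    calc muLim ρ hfin hC K = ENNReal.ofReal (muLim ρ hfin hC K).toReal :=
          (ENNReal.ofReal_toReal hne).symm
      _ ≤ ENNReal.ofReal (ell ρ K) := ENNReal.ofReal_le_ofReal hle2
  · have h1 := (contC ρ hfin hC).le_outerMeasure_compacts ⟨K, hK⟩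
    rw [muLim, Content.measure_apply _ hmeas]
    exact h1

include hb hfin hmass hC in
lemma muLim_mass : muLim ρ hfin hC univ ≤ ENNReal.ofReal b := by
  rw [muLim_compact ρ hfin hC isCompact_univ]
  exact ENNReal.ofReal_le_ofReal (ell_le_b ρ hb hfin hmass hC univ)

include hb hfin hmass hC in
lemma muLim_finite : IsFiniteMeasure (muLim ρ hfin hC) :=
  ⟨lt_of_le_of_lt (muLim_mass ρ hb hfin hmass hC) ENNReal.ofReal_lt_top⟩

/-! ### sum of clips -/

lemma sum_clip01 : ∀ (m : ℕ) (t : ℝ), 0 ≤ t → t ≤ m →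
    ∑ j ∈ Finset.range m, clip01 (t - j) = t := by
  intro m
  induction m with
  | zero => intro t h0 h1; simp only [Finset.range_zero, Finset.sum_empty]
            simp only [Nat.cast_zero] at h1; linarith
  | succ m ih =>
    intro t h0 h1
    rw [Finset.sum_range_succ]
    by_cases hle : t ≤ m
    · rw [ih t h0 hle, clip01_of_nonpos (by linarith)]; ring
    · push_neg at hle
      have hall : ∀ j ∈ Finset.range m, clip01 (t - j) = 1 := by
        intro j hj
        rw [Finset.mem_range] at hj
        refine clip01_of_one_le ?_
        have hj' : (j:ℝ) + 1 ≤ (m:ℝ) := by exact_mod_cast hj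
        linarith
      rw [Finset.sum_congr rfl hall]
      push_cast at h1
      rw [clip01_eq_self ⟨by linarith, by linarith⟩]
      simp only [Finset.sum_const, Finset.card_range, smul_eq_mul, mul_one]
      push_cast; ring

/-! ### the representation theorem -/

include hb hfin hmass hC in
lemma muLim_integral {c : ℝ≥0} {f : X → ℝ} (hf : LipschitzWith c f)
    (h0 : ∀ v, f v ∈ Icc 0 1) :
    ∫ v, f v ∂(muLim ρ hfin hC) = Lf ρ f := by
  haveI := muLim_finite ρ hb hfin hmass hC
  have key : ∀ m : ℕ, 0 < m →
      |(∫ v, f v ∂(muLim ρ hfin hC)) - Lf ρ f| ≤ b / m := by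
    intro m hm
    set G : ℕ → X → ℝ := fun j v => clip01 ((m:ℝ) * f v - j) with hG
    set E : ℕ → Set X := fun k => {v | (k:ℝ) ≤ (m:ℝ) * f v} with hE
    have hEclosed : ∀ k, IsClosed (E k) := fun k =>
      isClosed_le continuous_const (continuous_const.mul hf.continuous)
    have hEcompact : ∀ k, IsCompact (E k) := fun k => (hEclosed k).isCompact
    have hGlip : ∀ j : ℕ, LipschitzWith ((m:ℝ≥0) * c) (G j) := by
      intro j
      refine LipschitzWith.clip01_comp ?_
      refine LipschitzWith.of_dist_le_mul fun v w => ?_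
      have h1 : dist (f v) (f w) ≤ (c:ℝ) * dist v w := hf.dist_le_mul v w
      have h2 : dist ((m:ℝ) * f v - j) ((m:ℝ) * f w - j)
          = (m:ℝ) * dist (f v) (f w) := by
        simp only [Real.dist_eq]
        rw [show ((m:ℝ) * f v - j) - ((m:ℝ) * f w - j) = (m:ℝ) * (f v - f w) by ring]
        rw [abs_mul, abs_of_nonneg (by positivity)]
      rw [h2]
      push_cast
      nlinarith [dist_nonneg (x := v) (y := w),
        mul_le_mul_of_nonneg_left h1 (by positivity : (0:ℝ) ≤ (m:ℝ))]
    have hG01 : ∀ j, ∀ v, G j v ∈ Icc (0:ℝ) 1 := fun j v => clip01_mem _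
    have hGlow : ∀ j : ℕ, ∀ v ∈ E (j+1), 1 ≤ G j v := by
      intro j v hv
      simp only [hE, mem_setOf_eq] at hv
      push_cast at hv
      simp only [hG]
      rw [clip01_of_one_le (by linarith)]
    have hGoff : ∀ j : ℕ, ∀ v ∉ E j, G j v ≤ 0 := by
      intro j v hv
      simp only [hE, mem_setOf_eq, not_le] at hv
      simp only [hG]
      rw [clip01_of_nonpos (by linarith)]
    have hLbound : ∀ j : ℕ, ell ρ (E (j+1)) ≤ Lf ρ (G j) ∧ Lf ρ (G j) ≤ ell ρ (E j) := by
      intro j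
      constructor
      · exact lemA ρ hfin hC (hEcompact (j+1)) (hGlip j) (hG01 j) (hGlow j)
      · exact lemB ρ hfin hC (hGlip j) (hG01 j) (hGoff j)
    have hmeq : ∀ k, (muLim ρ hfin hC (E k)).toReal = ell ρ (E k) := by
      intro k
      rw [muLim_compact ρ hfin hC (hEcompact k),
        ENNReal.toReal_ofReal (ell_nonneg ρ hfin hC _)]
    have hIbound : ∀ j : ℕ, ell ρ (E (j+1)) ≤ (∫ v, G j v ∂(muLim ρ hfin hC))
        ∧ (∫ v, G j v ∂(muLim ρ hfin hC)) ≤ ell ρ (E j) := by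
      intro j
      have hint : Integrable (G j) (muLim ρ hfin hC) :=
        lipschitz_integrable _ (hGlip j) (hG01 j)
      constructor
      · rw [← hmeq (j+1), ← measureReal_def, ← integral_indicator_one (hEclosed (j+1)).measurableSet]
        refine integral_mono ((integrable_const (1:ℝ)).indicator
          (hEclosed (j+1)).measurableSet) hint fun v => ?_
        by_cases hv : v ∈ E (j+1)
        · rw [indicator_of_mem hv]; exact hGlow j v hv
        · rw [indicator_of_notMem hv]; exact (hG01 j v).1
      · rw [← hmeq j, ← measureReal_def, ← integral_indicator_one (hEclosed j).measurableSet]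
        refine integral_mono hint ((integrable_const (1:ℝ)).indicator
          (hEclosed j).measurableSet) fun v => ?_
        by_cases hv : v ∈ E j
        · rw [indicator_of_mem hv]; exact (hG01 j v).2
        · rw [indicator_of_notMem hv]; exact hGoff j v hv
    have hsum : ∀ v, ∑ j ∈ Finset.range m, G j v = (m:ℝ) * f v := by
      intro v
      simp only [hG]
      refine sum_clip01 m ((m:ℝ) * f v) (mul_nonneg (by positivity) (h0 v).1) ?_
      calc (m:ℝ) * f v ≤ (m:ℝ) * 1 := mul_le_mul_of_nonneg_left (h0 v).2 (by positivity)
        _ = (m:ℝ) := mul_one _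
    have hintsum : (m:ℝ) * ∫ v, f v ∂(muLim ρ hfin hC)
        = ∑ j ∈ Finset.range m, ∫ v, G j v ∂(muLim ρ hfin hC) := by
      rw [← MeasureTheory.integral_const_mul]
      calc ∫ v, (m:ℝ) * f v ∂(muLim ρ hfin hC)
          = ∫ v, ∑ j ∈ Finset.range m, G j v ∂(muLim ρ hfin hC) :=
            integral_congr_ae (Eventually.of_forall fun v => (hsum v).symm)
        _ = ∑ j ∈ Finset.range m, ∫ v, G j v ∂(muLim ρ hfin hC) :=
            integral_finset_sum _ fun j _ => lipschitz_integrable _ (hGlip j) (hG01 j)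
    have hLsum : (m:ℝ) * Lf ρ f = ∑ j ∈ Finset.range m, Lf ρ (G j) := by
      have h1 : Tendsto (fun n => (m:ℝ) * ∫ v, f v ∂(ρ n)) atTop (𝓝 ((m:ℝ) * Lf ρ f)) :=
        (Ltend ρ hfin hC hf h0).const_mul (m:ℝ)
      have h2 : Tendsto (fun n => ∑ j ∈ Finset.range m, ∫ v, G j v ∂(ρ n)) atTop
          (𝓝 (∑ j ∈ Finset.range m, Lf ρ (G j))) :=
        tendsto_finset_sum _ fun j _ => Ltend ρ hfin hC (hGlip j) (hG01 j)
      have h3 : (fun n => (m:ℝ) * ∫ v, f v ∂(ρ n))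
          = fun n => ∑ j ∈ Finset.range m, ∫ v, G j v ∂(ρ n) := by
        funext n
        haveI := hfin n
        rw [← MeasureTheory.integral_const_mul]
        calc ∫ v, (m:ℝ) * f v ∂(ρ n)
            = ∫ v, ∑ j ∈ Finset.range m, G j v ∂(ρ n) :=
              integral_congr_ae (Eventually.of_forall fun v => (hsum v).symm)
          _ = ∑ j ∈ Finset.range m, ∫ v, G j v ∂(ρ n) :=
              integral_finset_sum _ fun j _ => lipschitz_integrable _ (hGlip j) (hG01 j)
      rw [h3] at h1
      exact tendsto_nhds_unique h1 h2
    have habs : ∀ j ∈ Finset.range m,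
        |(∫ v, G j v ∂(muLim ρ hfin hC)) - Lf ρ (G j)|
          ≤ ell ρ (E j) - ell ρ (E (j+1)) := by
      intro j _
      have h1 := (hLbound j).1
      have h2 := (hLbound j).2
      have h3 := (hIbound j).1
      have h4 := (hIbound j).2
      rw [abs_sub_le_iff]
      constructor <;> linarith
    have hsum_tel : ∑ j ∈ Finset.range m, (ell ρ (E j) - ell ρ (E (j+1)))
        = ell ρ (E 0) - ell ρ (E m) := Finset.sum_range_sub' (fun j => ell ρ (E j)) m
    have hEb : ell ρ (E 0) ≤ b := ell_le_b ρ hb hfin hmass hC (E 0)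
    have hEm : 0 ≤ ell ρ (E m) := ell_nonneg ρ hfin hC (E m)
    have hmain : |(m:ℝ) * ((∫ v, f v ∂(muLim ρ hfin hC)) - Lf ρ f)| ≤ b := by
      calc |(m:ℝ) * ((∫ v, f v ∂(muLim ρ hfin hC)) - Lf ρ f)|
          = |∑ j ∈ Finset.range m,
              ((∫ v, G j v ∂(muLim ρ hfin hC)) - Lf ρ (G j))| := by
            rw [mul_sub, hintsum, hLsum, Finset.sum_sub_distrib]
        _ ≤ ∑ j ∈ Finset.range m,
              |(∫ v, G j v ∂(muLim ρ hfin hC)) - Lf ρ (G j)| :=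
            Finset.abs_sum_le_sum_abs _ _
        _ ≤ ∑ j ∈ Finset.range m, (ell ρ (E j) - ell ρ (E (j+1))) :=
            Finset.sum_le_sum habs
        _ = ell ρ (E 0) - ell ρ (E m) := hsum_tel
        _ ≤ b := by linarith
    have hmpos : (0:ℝ) < m := by exact_mod_cast hm
    rw [abs_mul, abs_of_pos hmpos] at hmain
    rw [le_div_iff₀ hmpos]
    linarith
  have htendsto : Tendsto (fun m : ℕ => b / (m:ℝ)) atTop (𝓝 0) :=
    Tendsto.div_atTop tendsto_const_nhds tendsto_natCast_atTop_atTop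
  have habs0 : |(∫ v, f v ∂(muLim ρ hfin hC)) - Lf ρ f| ≤ 0 := by
    refine le_of_tendsto_of_tendsto tendsto_const_nhds htendsto ?_
    exact eventually_atTop.2 ⟨1, fun m hm => key m (by omega)⟩
  have hnn := abs_nonneg ((∫ v, f v ∂(muLim ρ hfin hC)) - Lf ρ f)
  have heq0 : |(∫ v, f v ∂(muLim ρ hfin hC)) - Lf ρ f| = 0 := le_antisymm habs0 hnn
  rwa [abs_eq_zero, sub_eq_zero] at heq0

/-! ### univ and open sets -/

lemma ell_univ : ell ρ univ = Lf ρ (fun _ => (1:ℝ)) := by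
  have h1 : ∀ n : ℕ, psi (univ : Set X) n = fun _ => (1:ℝ) := by
    intro n
    funext v
    exact psi_one_of_mem (mem_univ v)
  unfold ell
  simp_rw [h1]
  exact ciInf_const

include hb hfin hmass hC in
lemma muLim_univ :
    muLim ρ hfin hC univ = ENNReal.ofReal (Lf ρ (fun _ => (1:ℝ))) := by
  rw [muLim_compact ρ hfin hC isCompact_univ, ell_univ]

noncomputable def hfunU (U : Set X) (k : ℕ) (v : X) : ℝ :=
  clip01 (((k:ℝ)+1) * Metric.infDist v Uᶜ)

lemma hfunU_mem (U : Set X) (k : ℕ) (v : X) : hfunU U k v ∈ Icc (0:ℝ) 1 := clip01_mem _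

lemma hfunU_lip (U : Set X) (k : ℕ) : LipschitzWith (k+1) (hfunU U k) := by
  refine LipschitzWith.clip01_comp ?_
  refine LipschitzWith.of_dist_le_mul fun v w => ?_
  have h1 : dist (Metric.infDist v Uᶜ) (Metric.infDist w Uᶜ) ≤ dist v w := by
    simpa using (Metric.lipschitz_infDist_pt Uᶜ).dist_le_mul v w
  have h2 : dist (((k:ℝ)+1) * Metric.infDist v Uᶜ) (((k:ℝ)+1) * Metric.infDist w Uᶜ)
      = ((k:ℝ)+1) * dist (Metric.infDist v Uᶜ) (Metric.infDist w Uᶜ) := by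
    simp only [Real.dist_eq, ← mul_sub, abs_mul, abs_of_nonneg (by positivity : (0:ℝ) ≤ (k:ℝ)+1)]
  rw [h2]
  have h3 : ((k+1 : ℝ≥0) : ℝ) = (k:ℝ)+1 := by push_cast; ring
  rw [h3]
  exact mul_le_mul_of_nonneg_left h1 (by positivity)

include hb hfin hmass hC in
lemma muLim_open {U : Set X} (hU : IsOpen U) (hUne : U ≠ univ) :
    muLim ρ hfin hC U = ⨆ k : ℕ, ENNReal.ofReal (Lf ρ (hfunU U k)) := by
  haveI := muLim_finite ρ hb hfin hmass hC
  have hUc : (Uᶜ).Nonempty := nonempty_compl.2 hUne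
  have hind : ∀ v, (U.indicator (fun _ => (1:ℝ≥0∞)) v)
      = ⨆ k : ℕ, ENNReal.ofReal (hfunU U k v) := by
    intro v
    by_cases hv : v ∈ U
    · rw [indicator_of_mem hv]
      have hnm : v ∉ Uᶜ := fun h => h hv
      have hdpos : 0 < Metric.infDist v Uᶜ :=
        (hU.isClosed_compl.notMem_iff_infDist_pos hUc).1 hnm
      obtain ⟨k, hk⟩ := exists_nat_gt (1 / Metric.infDist v Uᶜ)
      refine le_antisymm ?_ (iSup_le fun k => ENNReal.ofReal_le_one.2 (clip01_le_one _))
      refine le_trans ?_ (le_iSup _ k)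
      have h1 : hfunU U k v = 1 := by
        refine clip01_of_one_le ?_
        rw [div_lt_iff₀ hdpos] at hk
        nlinarith [Metric.infDist_nonneg (x := v) (s := Uᶜ)]
      rw [h1]
      simp
    · rw [indicator_of_notMem hv]
      have h0 : ∀ k : ℕ, hfunU U k v = 0 := by
        intro k
        unfold hfunU
        rw [Metric.infDist_zero_of_mem (by simpa using hv), mul_zero]
        exact clip01_of_nonpos le_rfl
      simp [h0]
  rw [show muLim ρ hfin hC U = ∫⁻ v, U.indicator (fun _ => (1:ℝ≥0∞)) v ∂(muLim ρ hfin hC)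
    from (lintegral_indicator_one hU.measurableSet).symm]
  rw [lintegral_congr hind]
  rw [lintegral_iSup (fun k => ((hfunU_lip U k).continuous.measurable).ennreal_ofReal) ?_]
  · congr 1
    funext k
    rw [← ofReal_integral_eq_lintegral_ofReal
      (lipschitz_integrable _ (hfunU_lip U k) (hfunU_mem U k))
      (Eventually.of_forall fun v => (hfunU_mem U k v).1)]
    rw [muLim_integral ρ hb hfin hmass hC (hfunU_lip U k) (hfunU_mem U k)]
  · intro k l hkl v
    refine ENNReal.ofReal_le_ofReal (clip01_mono ?_)
    have : ((k:ℝ)+1) ≤ ((l:ℝ)+1) := by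
      have : (k:ℝ) ≤ (l:ℝ) := Nat.cast_le.2 hkl
      linarith
    exact mul_le_mul_of_nonneg_right this Metric.infDist_nonneg

end Limit

end MbProof


open MbProof Set in
/-- `(M̄^b, d̄^b)` is complete: every Cauchy sequence of families in
`M̄^b` converges in `d̄^b` to a limit in `M̄^b`. -/
theorem Mb_complete
    {Ω : Type*} [MeasurableSpace Ω] [Nonempty Ω]
    (b : ℝ) (hb : 0 < b)
    (μs : ℕ → Ω → Measure Circle2pi)
    (hmem : ∀ n, MemMb b (μs n))
    (hcauchy : ∀ ε > (0:ℝ), ∃ N, ∀ i ≥ N, ∀ j ≥ N, dbarb (μs i) (μs j) < ε) :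
    ∃ μ : Ω → Measure Circle2pi, MemMb b μ ∧
      Tendsto (fun n => dbarb (μs n) μ) atTop (𝓝 0) := by
  classical
  -- pointwise uniform Cauchy property
  have hpc : ∀ ε > (0:ℝ), ∃ N, ∀ i ≥ N, ∀ j ≥ N, ∀ x, dBL (μs i x) (μs j x) ≤ ε := by
    intro ε hε
    obtain ⟨N, hN⟩ := hcauchy ε hε
    exact ⟨N, fun i hi j hj x =>
      (pointwise_le_dbarb hb (hmem i) (hmem j) x).trans (hN i hi j hj).le⟩
  have hCx : ∀ x : Ω, ∀ ε > (0:ℝ), ∃ N, ∀ i ≥ N, ∀ j ≥ N,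
      dBL (μs i x) (μs j x) ≤ ε := fun x ε hε =>
    (hpc ε hε).imp fun N hN i hi j hj => hN i hi j hj x
  have hfinx : ∀ x : Ω, ∀ n : ℕ, IsFiniteMeasure (μs n x) := fun x n =>
    finite_of_memMb (hmem n) x
  have hmassx : ∀ x : Ω, ∀ n : ℕ, μs n x univ ≤ ENNReal.ofReal b := fun x n =>
    (hmem n).2 x
  -- the limit family
  set μlim : Ω → Measure Circle2pi :=
    fun x => muLim (fun n => μs n x) (hfinx x) (hCx x) with hμlim
  haveI hfl : ∀ x, IsFiniteMeasure (μlim x) := fun x =>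
    muLim_finite (fun n => μs n x) hb (hfinx x) (hmassx x) (hCx x)
  -- mass bound
  have hmass' : ∀ x, μlim x univ ≤ ENNReal.ofReal b := fun x =>
    muLim_mass (fun n => μs n x) hb (hfinx x) (hmassx x) (hCx x)
  -- measurability of x ↦ Lf _ f
  have hLmeas : ∀ (c : ℝ≥0) (f : Circle2pi → ℝ), LipschitzWith c f →
      (∀ v, f v ∈ Set.Icc (0:ℝ) 1) →
      Measurable fun x => Lf (fun n => μs n x) f := by
    intro c f hf h01
    refine measurable_of_tendsto_metrizable
      (f := fun n x => ∫ v, f v ∂(μs n x))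
      (fun n => measurable_integral_family (hmem n) hf.continuous.measurable
        (fun v => (h01 v).1)) ?_
    rw [tendsto_pi_nhds]
    intro x
    exact Ltend (fun n => μs n x) (hfinx x) (hCx x) hf h01
  have hunivmeas : Measurable fun x => μlim x univ := by
    have heq : (fun x => μlim x univ)
        = fun x => ENNReal.ofReal (Lf (fun n => μs n x) (fun _ => (1:ℝ))) := by
      funext x
      exact muLim_univ (fun n => μs n x) hb (hfinx x) (hmassx x) (hCx x)
    rw [heq]
    exact ENNReal.measurable_ofReal.comp
      (hLmeas 1 _ (LipschitzWith.const' 1) (fun v => ⟨zero_le_one, le_refl 1⟩))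
  -- measurability for every measurable set, via the π-λ theorem
  have hgen : (inferInstance : MeasurableSpace Circle2pi)
      = MeasurableSpace.generateFrom {U : Set Circle2pi | IsOpen U} := by
    rw [BorelSpace.measurable_eq (α := Circle2pi)]
    rfl
  have hmeasS : ∀ S : Set Circle2pi, MeasurableSet S → Measurable fun x => μlim x S := by
    have key : ∀ ⦃S : Set Circle2pi⦄, MeasurableSet S → Measurable fun x => μlim x S := by
      refine MeasurableSpace.induction_on_inter (C := fun S _ => Measurable fun x => μlim x S)
        hgen (fun s hs t ht _ => by
          simp only [Set.mem_setOf_eq] at hs ht ⊢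
          exact hs.inter ht) ?_ ?_ ?_ ?_
      · simp only [measure_empty]
        exact measurable_const
      · intro U hU
        by_cases hUne : U = univ
        · subst hUne; exact hunivmeas
        · have heq : (fun x => μlim x U)
              = fun x => ⨆ k : ℕ, ENNReal.ofReal (Lf (fun n => μs n x) (hfunU U k)) := by
            funext x
            exact muLim_open (fun n => μs n x) hb (hfinx x) (hmassx x) (hCx x) hU hUne
          rw [heq]
          refine Measurable.iSup fun k => ?_
          exact ENNReal.measurable_ofReal.comp
            (hLmeas (k+1) _ (hfunU_lip U k) (hfunU_mem U k))
      · intro t htm hCt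
        have heq : (fun x => μlim x tᶜ) = fun x => μlim x univ - μlim x t := by
          funext x
          rw [measure_compl htm (measure_ne_top (μlim x) t)]
        rw [heq]
        exact hunivmeas.sub hCt
      · intro g hdisj hgm hCg
        have heq : (fun x => μlim x (⋃ i, g i)) = fun x => ∑' i, μlim x (g i) := by
          funext x
          rw [measure_iUnion hdisj hgm]
        rw [heq]
        exact Measurable.ennreal_tsum hCg
    exact fun S hS => key hS
  have hmemlim : MemMb b μlim := by
    refine ⟨fun S hS => ENNReal.measurable_toReal.comp (hmeasS S hS), hmass'⟩
  -- convergence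
  have hconv : ∀ ε > (0:ℝ), ∃ N, ∀ n ≥ N, dbarb (μs n) μlim ≤ ε := by
    intro ε hε
    obtain ⟨N, hN⟩ := hpc ε hε
    refine ⟨N, fun n hn => ?_⟩
    refine dbarb_le_of_pointwise hb (hmem n) hmemlim hε.le fun x => ?_
    haveI := hfinx x n
    haveI := hfl x
    refine dBL_le fun f => ?_
    have hrep : ∫ v, f.1 v ∂(μlim x) = Lf (fun k => μs k x) f.1 :=
      muLim_integral (fun k => μs k x) hb (hfinx x) (hmassx x) (hCx x) f.2.1 f.2.2
    rw [hrep]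
    have ht := Ltend (fun k => μs k x) (hfinx x) (hCx x) f.2.1 f.2.2
    have htt : Tendsto (fun j => |(∫ v, f.1 v ∂(μs n x)) - ∫ v, f.1 v ∂(μs j x)|)
        atTop (𝓝 |(∫ v, f.1 v ∂(μs n x)) - Lf (fun k => μs k x) f.1|) :=
      (tendsto_const_nhds.sub ht).abs
    refine le_of_tendsto htt ?_
    refine eventually_atTop.2 ⟨N, fun j hj => ?_⟩
    haveI := hfinx x j
    exact (le_dBL f).trans (hN n hn j hj x)
  refine ⟨μlim, hmemlim, ?_⟩
  rw [Metric.tendsto_atTop]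
  intro ε hε
  obtain ⟨N, hN⟩ := hconv (ε/2) (by positivity)
  refine ⟨N, fun n hn => ?_⟩
  rw [Real.dist_eq, sub_zero, abs_of_nonneg (dbarb_nonneg hb (hmem n) hmemlim)]
  exact lt_of_le_of_lt (hN n hn) (by linarith)
end
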